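/- arXiv:2107.03243 — 5 statements merged into one kernel-verified Lean document; each statement's English description precedes it below -/
import Mathlib

section
/- In the polynomial ring C[x_0, x_1, x_2, ...] with involution θ(x_i) = -x_i, the invariant algebra is generated (as a commutative algebra) by the quadratic monomials q_{i,j} = x_i x_j for i ≥ j ≥ 0, and every algebraic relation among the q_{i,j} is a consequence of the quadratic relations q_{i,j} q_{k,ℓ} - q_{i,ℓ} q_{k,j} = 0. -/
/-!
STATEMENT 1: In `A = ℂ[x₀, x₁, ...]` with the involution `θ(xᵢ) = -xᵢ`, the invariant
algebra `A^θ` is generated as a commutative algebra by the quadratics `q_{i,j} = xᵢ xⱼ`,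
and the kernel of the surjection from the polynomial ring on symbols `Q_{i,j}` (i ≥ j)
onto `A^θ`, `Q_{i,j} ↦ q_{i,j}`, is generated by the quadratic relations
`Q_{i,j} Q_{k,ℓ} - Q_{i,ℓ} Q_{k,j}` (with `Q_{a,b}` interpreted as `Q_{b,a}` if a < b).
-/

noncomputable section

open MvPolynomial

/-- The involution `θ` with `θ(xᵢ) = -xᵢ`. -/
def theta : MvPolynomial ℕ ℂ →ₐ[ℂ] MvPolynomial ℕ ℂ :=
  MvPolynomial.aeval (fun i => -MvPolynomial.X i)

/-- The invariant subalgebra `A^θ`. -/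
def invariants : Subalgebra ℂ (MvPolynomial ℕ ℂ) :=
  AlgHom.equalizer theta (AlgHom.id ℂ (MvPolynomial ℕ ℂ))

/-- The polynomial ring on symbols `Q_{i,j}` indexed by pairs with `j ≤ i`. -/
abbrev QRing := MvPolynomial {p : ℕ × ℕ // p.2 ≤ p.1} ℂ

/-- The symbol `Q_{a,b}`, symmetrized: `Q_{a,b} = Q_{b,a}`. -/
def Qsym (a b : ℕ) : QRing :=
  if h : b ≤ a then MvPolynomial.X ⟨(a, b), h⟩
  else MvPolynomial.X ⟨(b, a), le_of_not_ge h⟩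

/-- The map `Q_{i,j} ↦ xᵢ xⱼ`. -/
def toInv : QRing →ₐ[ℂ] MvPolynomial ℕ ℂ :=
  MvPolynomial.aeval (fun p => MvPolynomial.X p.1.1 * MvPolynomial.X p.1.2)

-- ==== helpers ====
abbrev Pairs := {p : ℕ × ℕ // p.2 ≤ p.1}

lemma Qsym_comm (a b : ℕ) : Qsym a b = Qsym b a := by
  unfold Qsym
  by_cases h1 : b ≤ a <;> by_cases h2 : a ≤ b <;> simp only [h1, h2, dif_pos, dif_neg, not_true, not_false_iff]
  · have : a = b := le_antisymm h2 h1
    subst this; rfl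
  · exact absurd (le_total b a) (by simp [h1, h2])

lemma X_pair (a b : ℕ) (h : b ≤ a) : (MvPolynomial.X ⟨(a,b),h⟩ : QRing) = Qsym a b := by
  simp [Qsym, h]

lemma pair_decomp (q : Pairs) {i : ℕ} (h : i ∈ (({q.1.1, q.1.2}) : Multiset ℕ)) :
    ∃ k, (MvPolynomial.X q : QRing) = Qsym i k ∧
      (({q.1.1, q.1.2}) : Multiset ℕ) = ({i, k} : Multiset ℕ) := by
  obtain ⟨⟨a,b⟩, hab⟩ := q
  simp only [Multiset.insert_eq_cons, Multiset.mem_cons, Multiset.mem_singleton] at h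
  rcases h with rfl|rfl
  · exact ⟨b, X_pair _ _ hab, rfl⟩
  · exact ⟨a, by rw [X_pair _ _ hab, Qsym_comm], Multiset.cons_swap _ _ _⟩

def pairify (k l : ℕ) : Pairs := if h : l ≤ k then ⟨(k,l),h⟩ else ⟨(l,k), le_of_not_ge h⟩

lemma X_pairify (k l : ℕ) : (MvPolynomial.X (pairify k l) : QRing) = Qsym k l := by
  unfold pairify Qsym; split <;> rfl

lemma pair_pairify (k l : ℕ) :
    (({(pairify k l).1.1, (pairify k l).1.2}) : Multiset ℕ) = ({k, l} : Multiset ℕ) := by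
  unfold pairify; split
  · rfl
  · exact Multiset.cons_swap _ _ _

def fl (M : Multiset Pairs) : Multiset ℕ := M.bind fun p => {p.1.1, p.1.2}

lemma fl_zero : fl 0 = 0 := rfl

lemma fl_cons (p : Pairs) (M : Multiset Pairs) :
    fl (p ::ₘ M) = (({p.1.1, p.1.2}) : Multiset ℕ) + fl M := Multiset.cons_bind _ _ _

lemma pair_add (a b : ℕ) (s : Multiset ℕ) :
    (({a, b}) : Multiset ℕ) + s = a ::ₘ b ::ₘ s := by
  simp [Multiset.insert_eq_cons, Multiset.cons_add, Multiset.singleton_add]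

lemma card_fl (M : Multiset Pairs) : Multiset.card (fl M) = 2 * Multiset.card M := by
  induction M using Multiset.induction with
  | empty => rfl
  | cons p M ih => rw [fl_cons, Multiset.card_add, ih, Multiset.card_cons]; simp [Multiset.insert_eq_cons]; ring

def PQ (M : Multiset Pairs) : QRing := (M.map MvPolynomial.X).prod

lemma PQ_zero : PQ 0 = 1 := rfl

lemma PQ_cons (p : Pairs) (M : Multiset Pairs) : PQ (p ::ₘ M) = MvPolynomial.X p * PQ M := by
  simp [PQ]

def RelSet : Set QRing :=
  {r : QRing | ∃ i j k ℓ : ℕ, r = Qsym i j * Qsym k ℓ - Qsym i ℓ * Qsym k j}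

def I : Ideal QRing := Ideal.span RelSet

lemma rel_mem (i j k l : ℕ) : Qsym i j * Qsym k l - Qsym i l * Qsym k j ∈ I :=
  Ideal.subset_span ⟨i, j, k, l, rfl⟩

lemma key : ∀ n (M M' : Multiset Pairs), Multiset.card M ≤ n → fl M = fl M' →
    Ideal.Quotient.mk I (PQ M) = Ideal.Quotient.mk I (PQ M') := by
  intro n
  induction n with
  | zero =>
    intro M M' hc hf
    have hM : M = 0 := Multiset.card_eq_zero.mp (Nat.le_zero.mp hc)
    subst hM
    have h1 := card_fl M'
    rw [← hf] at h1
    simp only [fl_zero, Multiset.card_zero] at h1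
    have h2 : M' = 0 := Multiset.card_eq_zero.mp (by omega)
    rw [h2]
  | succ n ih =>
    intro M M' hc hf
    rcases Multiset.empty_or_exists_mem M with rfl | ⟨p, hp⟩
    · have h1 := card_fl M'
      rw [← hf] at h1
      simp only [fl_zero, Multiset.card_zero] at h1
      have h2 : M' = 0 := Multiset.card_eq_zero.mp (by omega)
      rw [h2]
    obtain ⟨M₀, rfl⟩ := Multiset.exists_cons_of_mem hp
    have hcard0 : Multiset.card M₀ ≤ n := by
      have := hc; rw [Multiset.card_cons] at this; omega
    set i := p.1.1 with hi_def
    set j := p.1.2 with hj_def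
    have hXp : (MvPolynomial.X p : QRing) = Qsym i j := by
      rw [hi_def, hj_def, ← X_pair p.1.1 p.1.2 p.2]
    have hflM : fl (p ::ₘ M₀) = i ::ₘ j ::ₘ fl M₀ := by
      rw [fl_cons, pair_add]
    have hiM' : i ∈ fl M' := by
      rw [← hf, hflM]; exact Multiset.mem_cons_self _ _
    obtain ⟨q, hq, hiq⟩ := Multiset.mem_bind.mp hiM'
    obtain ⟨k, hXq, hflq⟩ := pair_decomp q hiq
    obtain ⟨M₁, rfl⟩ := Multiset.exists_cons_of_mem hq
    have hflM' : fl (q ::ₘ M₁) = i ::ₘ k ::ₘ fl M₁ := by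
      rw [fl_cons, hflq, pair_add]
    have hf1 : j ::ₘ fl M₀ = k ::ₘ fl M₁ := by
      have h2 := hf
      rw [hflM, hflM'] at h2
      exact (Multiset.cons_inj_right i).mp h2
    rw [PQ_cons, PQ_cons, hXp, hXq, map_mul, map_mul]
    by_cases hkj : k = j
    · rw [hkj] at hf1 ⊢
      have hf0 : fl M₀ = fl M₁ := (Multiset.cons_inj_right j).mp hf1
      rw [ih M₀ M₁ hcard0 hf0]
    · have hj1 : j ∈ fl M₁ := by
        have : j ∈ k ::ₘ fl M₁ := hf1 ▸ Multiset.mem_cons_self _ _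
        rcases Multiset.mem_cons.mp this with h | h
        · exact absurd h.symm hkj
        · exact h
      obtain ⟨r, hr, hjr⟩ := Multiset.mem_bind.mp hj1
      obtain ⟨l, hXr, hflr⟩ := pair_decomp r hjr
      obtain ⟨M₂, rfl⟩ := Multiset.exists_cons_of_mem hr
      have hflM₁ : fl (r ::ₘ M₂) = j ::ₘ l ::ₘ fl M₂ := by
        rw [fl_cons, hflr, pair_add]
      have hf2 : fl M₀ = k ::ₘ l ::ₘ fl M₂ := by
        have h3 : j ::ₘ fl M₀ = j ::ₘ k ::ₘ l ::ₘ fl M₂ := by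
          rw [hf1, hflM₁, Multiset.cons_swap]
        exact (Multiset.cons_inj_right j).mp h3
      have hfN : fl M₀ = fl (pairify k l ::ₘ M₂) := by
        rw [fl_cons, pair_pairify, pair_add, hf2]
      have ihA := ih M₀ (pairify k l ::ₘ M₂) hcard0 hfN
      rw [PQ_cons, X_pairify, map_mul] at ihA
      rw [PQ_cons, hXr, map_mul, ihA]
      rw [← map_mul, ← map_mul, ← map_mul, ← map_mul]
      rw [Ideal.Quotient.eq]
      have : Qsym i j * (Qsym k l * PQ M₂) - Qsym i k * (Qsym j l * PQ M₂)
          = (Qsym i j * Qsym l k - Qsym i k * Qsym l j) * PQ M₂ := by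
        rw [Qsym_comm l k, Qsym_comm l j]; ring
      rw [this]
      exact Ideal.mul_mem_right _ _ (rel_mem i j l k)

-- generic: product over toMultiset mapped
lemma prod_map_toMultiset {α M : Type*} [CommMonoid M] (f : α →₀ ℕ) (g : α → M) :
    (f.toMultiset.map g).prod = f.prod fun a n => g a ^ n := by
  rw [Finsupp.toMultiset_map, Finsupp.prod_toMultiset,
    Finsupp.prod_mapDomain_index (fun _ => pow_zero _) (fun _ m n => pow_add _ _ _)]

lemma monomial_eq_PQ (e : Pairs →₀ ℕ) :
    MvPolynomial.monomial e (1 : ℂ) = PQ e.toMultiset := by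
  rw [PQ, prod_map_toMultiset, monomial_eq, C_1, one_mul]

lemma toFinsupp_cons' (a : ℕ) (s : Multiset ℕ) :
    (a ::ₘ s).toFinsupp = Finsupp.single a 1 + s.toFinsupp := by
  rw [← Multiset.singleton_add, Multiset.toFinsupp_add, Multiset.toFinsupp_singleton]

lemma toInv_PQ (M : Multiset Pairs) :
    toInv (PQ M) = MvPolynomial.monomial (fl M).toFinsupp (1 : ℂ) := by
  induction M using Multiset.induction with
  | empty =>
    rw [PQ_zero, map_one, fl_zero, Multiset.toFinsupp_zero, monomial_zero', C_1]
  | cons p M ih =>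
    rw [PQ_cons, map_mul, ih, fl_cons, pair_add, toFinsupp_cons', toFinsupp_cons']
    rw [toInv, aeval_X]
    rw [monomial_single_add, monomial_single_add, pow_one, pow_one, mul_assoc]

lemma toInv_monomial (e : Pairs →₀ ℕ) (c : ℂ) :
    toInv (MvPolynomial.monomial e c)
      = MvPolynomial.monomial (fl e.toMultiset).toFinsupp c := by
  have h1 : MvPolynomial.monomial e c = C c * MvPolynomial.monomial e 1 := by
    rw [C_mul_monomial, mul_one]
  rw [h1, map_mul, monomial_eq_PQ, toInv_PQ]
  rw [toInv, aeval_C, MvPolynomial.algebraMap_eq, C_mul_monomial, mul_one]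

lemma ker_le_I : RingHom.ker (toInv : QRing →ₐ[ℂ] MvPolynomial ℕ ℂ) ≤ I := by
  classical
  intro p hp
  have hp0 : toInv p = 0 := hp
  rw [← Ideal.Quotient.eq_zero_iff_mem]
  set g : (Pairs →₀ ℕ) → (ℕ →₀ ℕ) := fun e => (fl e.toMultiset).toFinsupp with hg
  set π := Ideal.Quotient.mk I with hπ
  have hkey : ∀ e e' : Pairs →₀ ℕ, g e = g e' →
      π (MvPolynomial.monomial e (1:ℂ)) = π (MvPolynomial.monomial e' 1) := by
    intro e e' h
    have hfl : fl e.toMultiset = fl e'.toMultiset := by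
      have h2 := congrArg Finsupp.toMultiset h
      simpa only [hg, Multiset.toFinsupp_toMultiset] using h2
    rw [monomial_eq_PQ, monomial_eq_PQ]
    exact key (Multiset.card e.toMultiset) _ _ le_rfl hfl
  set f : (ℕ →₀ ℕ) → QRing ⧸ I :=
    fun ν => if h : ∃ e, g e = ν then π (MvPolynomial.monomial h.choose (1:ℂ)) else 0 with hfdef
  have hf : ∀ e, π (MvPolynomial.monomial e (1:ℂ)) = f (g e) := by
    intro e
    have hex : ∃ e', g e' = g e := ⟨e, rfl⟩
    simp only [hfdef, dif_pos hex]
    exact hkey e hex.choose hex.choose_spec.symm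
  have hsum : π p = ∑ e ∈ p.support, π (C (coeff e p)) * f (g e) := by
    conv_lhs => rw [as_sum p]
    rw [map_sum]
    refine Finset.sum_congr rfl fun e _ => ?_
    rw [← hf, ← map_mul, C_mul_monomial, mul_one]
  have hco : ∀ ν : ℕ →₀ ℕ,
      ∑ e ∈ p.support.filter (fun e => g e = ν), coeff e p = 0 := by
    intro ν
    have h1 : toInv p = ∑ e ∈ p.support, MvPolynomial.monomial (g e) (coeff e p) := by
      conv_lhs => rw [as_sum p]
      rw [map_sum]
      exact Finset.sum_congr rfl fun e _ => toInv_monomial e _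
    have h2 := congrArg (coeff ν) h1
    rw [hp0] at h2
    simp only [coeff_zero, coeff_sum, coeff_monomial] at h2
    rw [Finset.sum_filter]
    exact h2.symm
  rw [hsum]
  have hgroup : ∑ e ∈ p.support, π (C (coeff e p)) * f (g e)
      = ∑ ν ∈ p.support.image g, ∑ e ∈ p.support.filter (fun e => g e = ν),
          π (C (coeff e p)) * f (g e) := by
    rw [Finset.sum_fiberwise_eq_sum_filter]
    rw [Finset.filter_true_of_mem (fun e he => Finset.mem_image_of_mem g he)]
  rw [hgroup]
  refine Finset.sum_eq_zero fun ν _ => ?_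
  have hinner : ∑ e ∈ p.support.filter (fun e => g e = ν), π (C (coeff e p)) * f (g e)
      = (∑ e ∈ p.support.filter (fun e => g e = ν), π (C (coeff e p))) * f ν := by
    rw [Finset.sum_mul]
    refine Finset.sum_congr rfl fun e he => ?_
    rw [(Finset.mem_filter.mp he).2]
  rw [hinner, ← map_sum, ← map_sum, hco ν, map_zero, map_zero, zero_mul]

lemma toInv_Qsym (a b : ℕ) : toInv (Qsym a b) = MvPolynomial.X a * MvPolynomial.X b := by
  unfold Qsym
  split
  · rw [toInv, aeval_X]
  · rw [toInv, aeval_X]; exact mul_comm _ _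

lemma I_le_ker : I ≤ RingHom.ker (toInv : QRing →ₐ[ℂ] MvPolynomial ℕ ℂ) := by
  rw [I, Ideal.span_le]
  rintro r ⟨i, j, k, l, rfl⟩
  rw [SetLike.mem_coe, RingHom.mem_ker, map_sub, map_mul, map_mul,
    toInv_Qsym, toInv_Qsym, toInv_Qsym, toInv_Qsym]
  ring

lemma ker_eq_I : RingHom.ker (toInv : QRing →ₐ[ℂ] MvPolynomial ℕ ℂ) = I :=
  le_antisymm ker_le_I I_le_ker

-- ===== Part 1 =====

def S : Set (MvPolynomial ℕ ℂ) :=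
  {q : MvPolynomial ℕ ℂ | ∃ i j : ℕ, j ≤ i ∧ q = MvPolynomial.X i * MvPolynomial.X j}

lemma theta_monomial (v : ℕ →₀ ℕ) (c : ℂ) :
    theta (MvPolynomial.monomial v c)
      = (-1 : MvPolynomial ℕ ℂ) ^ (Multiset.card v.toMultiset) * MvPolynomial.monomial v c := by
  have hm : MvPolynomial.monomial v c = C c * (v.toMultiset.map MvPolynomial.X).prod := by
    rw [prod_map_toMultiset, monomial_eq]
  rw [hm, map_mul]
  have hC : theta (C c : MvPolynomial ℕ ℂ) = C c := by
    rw [theta, aeval_C, MvPolynomial.algebraMap_eq]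
  rw [hC, map_multiset_prod, Multiset.map_map]
  have hmap : v.toMultiset.map (⇑theta ∘ MvPolynomial.X)
      = (v.toMultiset.map MvPolynomial.X).map Neg.neg := by
    rw [Multiset.map_map]
    refine Multiset.map_congr rfl fun i _ => ?_
    simp only [Function.comp_apply, theta, aeval_X]
  rw [hmap, Multiset.prod_map_neg, Multiset.card_map]
  ring

lemma prod_X_mem_adjoin : ∀ n (M : Multiset ℕ), Multiset.card M ≤ n →
    Even (Multiset.card M) →
    (M.map MvPolynomial.X).prod ∈ Algebra.adjoin ℂ S := by
  intro n
  induction n with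
  | zero =>
    intro M hc _
    rw [Multiset.card_eq_zero.mp (Nat.le_zero.mp hc)]
    simpa using Subalgebra.one_mem _
  | succ n ih =>
    intro M hc he
    rcases Multiset.empty_or_exists_mem M with rfl | ⟨a, ha⟩
    · simpa using Subalgebra.one_mem _
    obtain ⟨M₁, rfl⟩ := Multiset.exists_cons_of_mem ha
    rcases Multiset.empty_or_exists_mem M₁ with rfl | ⟨b, hb⟩
    · exfalso
      simp only [Multiset.card_cons, Multiset.card_zero, zero_add] at he
      exact (Nat.not_even_iff_odd.mpr odd_one) he
    obtain ⟨M₂, rfl⟩ := Multiset.exists_cons_of_mem hb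
    have hXX : MvPolynomial.X a * MvPolynomial.X b ∈ Algebra.adjoin ℂ S := by
      apply Algebra.subset_adjoin
      rcases le_total b a with h | h
      · exact ⟨a, b, h, rfl⟩
      · exact ⟨b, a, h, mul_comm _ _⟩
    have hM₂ : (M₂.map MvPolynomial.X).prod ∈ Algebra.adjoin ℂ S := by
      apply ih
      · simp only [Multiset.card_cons] at hc; omega
      · simp only [Multiset.card_cons] at he ⊢
        rcases he with ⟨m, hm⟩
        exact ⟨m - 1, by omega⟩
    have : ((a ::ₘ b ::ₘ M₂).map (MvPolynomial.X : ℕ → MvPolynomial ℕ ℂ)).prod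
        = (MvPolynomial.X a * MvPolynomial.X b)
          * (M₂.map (MvPolynomial.X : ℕ → MvPolynomial ℕ ℂ)).prod := by
      simp [Multiset.map_cons, Multiset.prod_cons, mul_assoc]
    rw [this]
    exact mul_mem hXX hM₂

lemma adjoin_eq_invariants : Algebra.adjoin ℂ S = invariants := by
  apply le_antisymm
  · rw [Algebra.adjoin_le_iff]
    rintro q ⟨i, j, hij, rfl⟩
    have h1 : theta (MvPolynomial.X i * MvPolynomial.X j)
        = MvPolynomial.X i * MvPolynomial.X j := by
      simp [theta]
    exact h1
  · intro p hp
    classical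
    have hθ : theta p = p := hp
    set sE := p.support.filter (fun v => Even (Multiset.card v.toMultiset)) with hsE
    set sO := p.support.filter (fun v => ¬ Even (Multiset.card v.toMultiset)) with hsO
    have hsplit : p = (∑ v ∈ sE, MvPolynomial.monomial v (coeff v p))
        + ∑ v ∈ sO, MvPolynomial.monomial v (coeff v p) := by
      rw [hsE, hsO, Finset.sum_filter_add_sum_filter_not]
      exact as_sum p
    have hth : theta p = (∑ v ∈ sE, MvPolynomial.monomial v (coeff v p))
        - ∑ v ∈ sO, MvPolynomial.monomial v (coeff v p) := by
      conv_lhs => rw [hsplit]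
      rw [map_add, map_sum, map_sum]
      have hE : ∀ v ∈ sE, theta (MvPolynomial.monomial v (coeff v p))
          = MvPolynomial.monomial v (coeff v p) := by
        intro v hv
        rw [theta_monomial, (Finset.mem_filter.mp hv).2.neg_one_pow, one_mul]
      have hO : ∀ v ∈ sO, theta (MvPolynomial.monomial v (coeff v p))
          = -MvPolynomial.monomial v (coeff v p) := by
        intro v hv
        rw [theta_monomial,
          (Nat.not_even_iff_odd.mp (Finset.mem_filter.mp hv).2).neg_one_pow]
        ring
      rw [Finset.sum_congr rfl hE, Finset.sum_congr rfl hO, Finset.sum_neg_distrib]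
      ring
    have hO0 : ∑ v ∈ sO, MvPolynomial.monomial v (coeff v p) = 0 := by
      have h1 : (∑ v ∈ sE, MvPolynomial.monomial v (coeff v p))
          + ∑ v ∈ sO, MvPolynomial.monomial v (coeff v p)
          = (∑ v ∈ sE, MvPolynomial.monomial v (coeff v p))
          - ∑ v ∈ sO, MvPolynomial.monomial v (coeff v p) := by
        rw [← hsplit, ← hth, hθ]
      have h2 : (2 : ℂ) • ∑ v ∈ sO, MvPolynomial.monomial v (coeff v p) = 0 := by
        rw [two_smul]
        linear_combination h1
      exact (smul_eq_zero.mp h2).resolve_left two_ne_zero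
    have hpE : p = ∑ v ∈ sE, MvPolynomial.monomial v (coeff v p) := by
      conv_lhs => rw [hsplit]
      rw [hO0, add_zero]
    rw [hpE]
    refine Subalgebra.sum_mem _ fun v hv => ?_
    have hev : Even (Multiset.card v.toMultiset) := (Finset.mem_filter.mp hv).2
    have hm : MvPolynomial.monomial v (coeff v p)
        = C (coeff v p) * (v.toMultiset.map MvPolynomial.X).prod := by
      rw [prod_map_toMultiset, monomial_eq]
    rw [hm]
    exact mul_mem (Subalgebra.algebraMap_mem _ (coeff v p))
      (prod_X_mem_adjoin (Multiset.card v.toMultiset) _ le_rfl hev)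

theorem invariants_generated_by_quadratics_with_determinantal_relations :
    (Algebra.adjoin ℂ
        {q : MvPolynomial ℕ ℂ | ∃ i j : ℕ, j ≤ i ∧ q = MvPolynomial.X i * MvPolynomial.X j}
      = invariants) ∧
    RingHom.ker (toInv : QRing →ₐ[ℂ] MvPolynomial ℕ ℂ)
      = Ideal.span {r : QRing | ∃ i j k ℓ : ℕ,
          r = Qsym i j * Qsym k ℓ - Qsym i ℓ * Qsym k j} := by
  constructor
  · exact adjoin_eq_invariants
  · exact ker_eq_I

end
end

section
/- Let V be a vertex algebra graded by conformal weight in nonnegative half-integers with V[0] ≅ C. Then Zhu's subspace C(V) = span{a_{(-2)} b : a, b ∈ V} is closed in the sense that the normally ordered product a_{(-1)} b descends to a well-defined commutative associative product on the quotient R_V = V / C(V), with unit the image of the vacuum vector. -/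
/-!
STATEMENT 10: Let `V` be a vertex algebra graded by conformal weight in nonnegative
half-integers with `V[0] ≅ ℂ`.  Then Zhu's subspace `C(V) = span{a_{(-2)}b}` is closed
under the normally ordered product in the sense that `a_{(-1)}b` descends to a
well-defined commutative associative product on `R_V = V / C(V)` (with unit the image
of the vacuum): `C(V)` is a two-sided ideal for the product `a_{(-1)}b`, and the
product is commutative and associative modulo `C(V)`.
-/

/-- A (non-super) vertex algebra over a commutative ring `R`. -/
structure VertexAlg (R : Type) [CommRing R] (V : Type) [AddCommGroup V] [Module R V] where
  mul : ℤ → V →ₗ[R] V →ₗ[R] V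
  one : V
  trunc : ∀ a b : V, ∃ N : ℤ, ∀ n : ℤ, N ≤ n → mul n a b = 0
  vacuum_left : ∀ (n : ℤ) (a : V), mul n one a = if n = -1 then a else 0
  vacuum_create : ∀ a : V, mul (-1) a one = a
  vacuum_right : ∀ (n : ℤ), 0 ≤ n → ∀ a : V, mul n a one = 0
  deriv_mul : ∀ (n : ℤ) (a b : V), mul n (mul (-2) a one) b = (-n) • mul (n - 1) a b
  skew : ∀ (n : ℤ) (a b : V),
    mul n a b = ∑ᶠ p : ℤ, ((p + 1).negOnePow : ℤ) • mul (n - p - 1) (mul p b a) one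
  quasi_assoc : ∀ a b c : V,
    mul (-1) (mul (-1) a b) c - mul (-1) a (mul (-1) b c) =
      ∑ᶠ n : ℕ, (mul (-(n : ℤ) - 2) a (mul (n : ℤ) b c) +
        mul (-(n : ℤ) - 2) b (mul (n : ℤ) a c))
  non_comm : ∀ (n : ℕ) (a b c : V),
    mul (n : ℤ) a (mul (-1) b c) - mul (-1) (mul (n : ℤ) a b) c -
        mul (-1) b (mul (n : ℤ) a c) =
      ∑ i ∈ Finset.Icc 1 n, (n.choose i) • mul ((i : ℤ) - 1) (mul ((n : ℤ) - (i : ℤ)) a b) c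
  jacobi : ∀ (r s : ℕ) (a b c : V),
    mul (r : ℤ) a (mul (s : ℤ) b c) = mul (s : ℤ) b (mul (r : ℤ) a c) +
      ∑ i ∈ Finset.range (r + 1),
        (r.choose i) • mul ((r : ℤ) + (s : ℤ) - (i : ℤ)) (mul (i : ℤ) a b) c

section Aux

variable {V : Type} [AddCommGroup V] [Module ℂ V] (Va : VertexAlg ℂ V)

/-- finsum of elements of a submodule lies in the submodule. -/
lemma aux_finsum_mem {ι : Type*} (p : Submodule ℂ V) (f : ι → V)
    (h : ∀ i, f i ∈ p) : (∑ᶠ i, f i) ∈ p := by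
  by_cases hf : (Function.support f).Finite
  · rw [finsum_eq_sum f hf]
    exact Submodule.sum_mem _ fun i _ => h i
  · rw [finsum_of_infinite_support hf]
    exact p.zero_mem

/-- All products with index `≤ -2` lie in `C`. -/
lemma aux_low_mem (k : ℕ) (a c : V) :
    Va.mul (-2 - (k : ℤ)) a c ∈
      Submodule.span ℂ {x : V | ∃ a b : V, x = Va.mul (-2) a b} := by
  induction k generalizing a with
  | zero =>
    exact Submodule.subset_span ⟨a, c, by norm_num⟩
  | succ k ih =>
    have h2 : (-2 - ((k+1 : ℕ) : ℤ)) = (-2 - (k:ℤ)) - 1 := by push_cast; ring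
    rw [h2]
    have hcoef : (-(-2 - (k:ℤ))) = 2 + (k:ℤ) := by ring
    have hd := Va.deriv_mul (-2 - (k : ℤ)) a c
    rw [hcoef] at hd
    have hne : ((2 + (k:ℤ) : ℤ) : ℂ) ≠ 0 := by
      exact_mod_cast (by omega : (2 + (k:ℤ)) ≠ 0)
    have hz : Va.mul (-2 - (k:ℤ)) (Va.mul (-2) a Va.one) c
        = ((2 + (k:ℤ) : ℤ) : ℂ) • Va.mul (-2 - (k:ℤ) - 1) a c := by
      rw [hd, Int.cast_smul_eq_zsmul]
    have hkey : Va.mul (-2 - (k:ℤ) - 1) a c =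
        (((2 + (k:ℤ) : ℤ) : ℂ))⁻¹ • Va.mul (-2 - (k:ℤ)) (Va.mul (-2) a Va.one) c := by
      rw [hz, inv_smul_smul₀ hne]
    rw [hkey]
    exact Submodule.smul_mem _ _ (ih (Va.mul (-2) a Va.one))

lemma aux_low_mem' (n : ℤ) (hn : n ≤ -2) (a c : V) :
    Va.mul n a c ∈ Submodule.span ℂ {x : V | ∃ a b : V, x = Va.mul (-2) a b} := by
  have : n = -2 - ((-2 - n).toNat : ℤ) := by
    have := Int.toNat_of_nonneg (by omega : (0:ℤ) ≤ -2 - n); omega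
  rw [this]
  exact aux_low_mem Va _ a c

/-- commutator mod C -/
lemma aux_comm (a b : V) :
    Va.mul (-1) a b - Va.mul (-1) b a ∈
      Submodule.span ℂ {x : V | ∃ a b : V, x = Va.mul (-2) a b} := by
  set C := Submodule.span ℂ {x : V | ∃ a b : V, x = Va.mul (-2) a b} with hC
  set F : ℤ → V := fun p => ((p + 1).negOnePow : ℤ) • Va.mul (-1 - p - 1) (Va.mul p b a) Va.one
    with hF
  obtain ⟨N, hN⟩ := Va.trunc b a
  have hFfin : (Function.support F).Finite := by
    apply Set.Finite.subset (Set.finite_Icc (-1 : ℤ) N)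
    intro p hp
    simp only [Function.mem_support, hF] at hp
    by_contra hmem
    simp only [Set.mem_Icc, not_and_or, not_le] at hmem
    apply hp
    rcases hmem with h | h
    · rw [Va.vacuum_right (-1 - p - 1) (by omega) _, smul_zero]
    · rw [hN p (by omega), map_zero, LinearMap.zero_apply, smul_zero]
  set G : ℤ → V := fun p => if p = -1 then Va.mul (-1) b a else 0 with hG
  have hGfin : (Function.support G).Finite := by
    apply Set.Finite.subset (Set.finite_singleton (-1 : ℤ))
    intro p hp
    simp only [Function.mem_support, hG] at hp
    by_contra h
    exact hp (if_neg h)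
  have hHfin : (Function.support (F - G)).Finite := by
    apply Set.Finite.subset (hFfin.union hGfin)
    intro p hp
    simp only [Function.mem_support, Pi.sub_apply] at hp
    by_contra h
    simp only [Set.mem_union, Function.mem_support, not_or, not_not] at h
    exact hp (by rw [h.1, h.2, sub_zero])
  have hsplit : Va.mul (-1) a b = (∑ᶠ p, G p) + ∑ᶠ p, (F - G) p := by
    rw [← finsum_add_distrib hGfin hHfin]
    rw [Va.skew (-1) a b]
    congr 1
    funext p
    simp [hF]
  have hGsum : (∑ᶠ p, G p) = Va.mul (-1) b a := by
    rw [finsum_eq_single G (-1) (fun x hx => if_neg hx)]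
    simp [hG]
  have hHmem : (∑ᶠ p, (F - G) p) ∈ C := by
    apply aux_finsum_mem
    intro p
    simp only [Pi.sub_apply, hF, hG]
    rcases lt_trichotomy p (-1) with h | h | h
    · rw [if_neg (by omega), sub_zero, Va.vacuum_right (-1 - p - 1) (by omega) _, smul_zero]
      exact C.zero_mem
    · subst h
      rw [if_pos rfl]
      have : ((-1 + 1 : ℤ).negOnePow : ℤ) • Va.mul (-1 - (-1) - 1) (Va.mul (-1) b a) Va.one
          = Va.mul (-1) b a := by
        norm_num [Va.vacuum_create]
      rw [this, sub_self]
      exact C.zero_mem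
    · rw [if_neg (by omega), sub_zero]
      exact zsmul_mem (aux_low_mem' Va (-1 - p - 1) (by omega) _ _) _
  rw [hsplit, hGsum]
  simpa using hHmem

/-- left ideal -/
lemma aux_left (a b : V)
    (ha : a ∈ Submodule.span ℂ {x : V | ∃ a b : V, x = Va.mul (-2) a b}) :
    Va.mul (-1) a b ∈ Submodule.span ℂ {x : V | ∃ a b : V, x = Va.mul (-2) a b} := by
  set C := Submodule.span ℂ {x : V | ∃ a b : V, x = Va.mul (-2) a b} with hC
  induction ha using Submodule.span_induction with
  | mem x hx =>
    obtain ⟨u, v, rfl⟩ := hx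
    have hder : ∀ w : V, Va.mul (-1) (Va.mul (-2) u Va.one) w = Va.mul (-2) u w := by
      intro w
      rw [Va.deriv_mul (-1) u w]
      norm_num
    rw [← hder v]
    have key := eq_add_of_sub_eq (Va.quasi_assoc (Va.mul (-2) u Va.one) v b)
    rw [key]
    apply C.add_mem
    · apply aux_finsum_mem
      intro n
      exact C.add_mem (aux_low_mem' Va _ (by omega) _ _) (aux_low_mem' Va _ (by omega) _ _)
    · rw [hder]
      exact Submodule.subset_span ⟨u, Va.mul (-1) v b, rfl⟩
  | zero => rw [map_zero, LinearMap.zero_apply]; exact C.zero_mem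
  | add x y hx hy ihx ihy => rw [map_add, LinearMap.add_apply]; exact C.add_mem ihx ihy
  | smul r x hx ihx => rw [map_smul, LinearMap.smul_apply]; exact C.smul_mem r ihx

end Aux

theorem zhu_quotient_is_commutative_associative
    (V : Type) [AddCommGroup V] [Module ℂ V] (Va : VertexAlg ℂ V)
    -- grading by conformal weight in nonnegative half-integers, `V[0] ≅ ℂ`:
    (gr : ℚ → Submodule ℂ V)
    (hsupp : ∀ q : ℚ, gr q ≠ ⊥ → 0 ≤ q ∧ ∃ m : ℕ, q = (m : ℚ) / 2)
    (hInt : DirectSum.IsInternal gr)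
    (h0 : gr 0 = Submodule.span ℂ {Va.one})
    (hone : Va.one ≠ 0) :
    -- Zhu's subspace `C(V)`:
    let C : Submodule ℂ V := Submodule.span ℂ {x : V | ∃ a b : V, x = Va.mul (-2) a b}
    (∀ a b : V, a ∈ C → Va.mul (-1) a b ∈ C) ∧
    (∀ a b : V, b ∈ C → Va.mul (-1) a b ∈ C) ∧
    (∀ a b : V, Va.mul (-1) a b - Va.mul (-1) b a ∈ C) ∧
    (∀ a b c : V,
      Va.mul (-1) (Va.mul (-1) a b) c - Va.mul (-1) a (Va.mul (-1) b c) ∈ C) := by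
  intro C
  refine ⟨fun a b ha => aux_left Va a b ha, ?_, fun a b => aux_comm Va a b, ?_⟩
  · intro a b hb
    have h1 := aux_comm Va a b
    have h2 := aux_left Va b a hb
    have : Va.mul (-1) a b = (Va.mul (-1) a b - Va.mul (-1) b a) + Va.mul (-1) b a := by abel
    rw [this]
    exact C.add_mem h1 h2
  · intro a b c
    rw [Va.quasi_assoc a b c]
    apply aux_finsum_mem
    intro n
    exact C.add_mem (aux_low_mem' Va _ (by omega) _ _) (aux_low_mem' Va _ (by omega) _ _)
end

section
/- Let A be an associative C-algebra, W a representation of A via ρ: A → End(W), and extend ρ to a Lie algebra action ρ̂ of A on Sym(W) by derivations, and further to an algebra map ρ̂: U(A) → End(Sym(W)) from the universal enveloping algebra of A (viewed as a Lie algebra via commutators). For μ ∈ U(A) and d ≥ 1, let Φ^d_μ = ρ̂(μ)|_{Sym^d(W)}. Let E ⊆ End(Sym^d(W)) be the span of all Φ^d_μ, filtered by E_r = span{Φ^d_μ : deg μ ≤ r}. Then E = E_d. -/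
/-!
STATEMENT 14: Let `A` be an associative ℂ-algebra acting on `W` via
`ρ : A → End(W)`, extended by derivations to an action `ρ̂` of `U(A)` on `Sym(W)`.
For `μ ∈ U(A)` and `d ≥ 1`, let `Φ^d_μ = ρ̂(μ)|_{Sym^d(W)}`, let
`E ⊆ End(Sym^d(W))` be the span of all `Φ^d_μ`, and `E_r` the span of those with
`deg μ ≤ r`.  Then `E = E_d`.
Here we realize `W = ι →₀ ℂ` (a vector space with basis `ι`), `Sym(W)` as the
polynomial ring `ℂ[ι]` with `Sym^d(W)` its degree-`d` homogeneous component, and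
`ρ̂(μ)` for `μ` of degree `≤ r` as linear combinations of compositions of at most `r`
of the derivations extending `ρ(a)`.
-/

noncomputable section

open MvPolynomial

variable (A : Type) [Ring A] [Algebra ℂ A] (ι : Type)
  (ρ : A →ₐ[ℂ] Module.End ℂ (ι →₀ ℂ))

/-- The embedding `W = ι →₀ ℂ → ℂ[ι]` sending basis vectors to the variables. -/
def emb : (ι →₀ ℂ) →ₗ[ℂ] MvPolynomial ι ℂ :=
  Finsupp.linearCombination ℂ MvPolynomial.X

/-- The derivation `ρ̂(a)` of `Sym(W) = ℂ[ι]` extending `ρ(a)`. -/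
def Der (a : A) : Derivation ℂ (MvPolynomial ι ℂ) (MvPolynomial ι ℂ) :=
  MvPolynomial.mkDerivation ℂ (fun i => emb ι (ρ a (Finsupp.single i 1)))

/-- The operator `ρ̂(a₁ ⋯ a_s)` for a list `l = [a₁,...,a_s]`. -/
def compDer (l : List A) : Module.End ℂ (MvPolynomial ι ℂ) :=
  (l.map (fun a => ((Der A ι ρ a).toLinearMap : Module.End ℂ (MvPolynomial ι ℂ)))).prod

/-- The restriction `Φ^d_{a₁⋯a_s}` of `ρ̂(a₁⋯a_s)` to `Sym^d(W)`. -/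
def Phi (d : ℕ) (l : List A) :
    (MvPolynomial.homogeneousSubmodule ι ℂ d) →ₗ[ℂ] MvPolynomial ι ℂ :=
  (compDer A ι ρ l) ∘ₗ (MvPolynomial.homogeneousSubmodule ι ℂ d).subtype

/- ========== auxiliary development ========== -/

/-- The auxiliary big ring `ℂ[ι][t₀, t₁, …]`. -/
abbrev BigR (ι : Type) := MvPolynomial ℕ (MvPolynomial ι ℂ)

/-- `nn a i = emb (ρ a eᵢ)`, the value of the derivation `ρ̂(a)` on `Xᵢ`. -/
def nn (a : A) (i : ι) : MvPolynomial ι ℂ := emb ι (ρ a (Finsupp.single i 1))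

lemma der_X (a : A) (i : ι) : Der A ι ρ a (X i) = nn A ι ρ a i := by
  simp [Der, nn, MvPolynomial.mkDerivation_X]

lemma der_emb (a : A) (w : ι →₀ ℂ) : Der A ι ρ a (emb ι w) = emb ι (ρ a w) := by
  have h : (Der A ι ρ a).toLinearMap ∘ₗ emb ι = emb ι ∘ₗ (ρ a : Module.End ℂ (ι →₀ ℂ)) := by
    ext j
    simp [emb, Der, Finsupp.linearCombination_single, MvPolynomial.mkDerivation_X]
  exact LinearMap.congr_fun h w

lemma der_nn (a b : A) (i : ι) :
    Der A ι ρ a (nn A ι ρ b i) = nn A ι ρ (a * b) i := by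
  rw [nn, der_emb, nn, map_mul]
  rfl

lemma der_C (a : A) (γ : ℂ) : Der A ι ρ a (C γ) = 0 := by
  rw [← MvPolynomial.algebraMap_eq]
  exact Derivation.map_algebraMap _ _

/-- The substitution `Xᵢ ↦ Xᵢ + ∑_{t∈u} t_t · ρ(c t)(Xᵢ)`. -/
def FF (u : Finset ℕ) (c : ℕ → A) : MvPolynomial ι ℂ →ₐ[ℂ] BigR ι :=
  aeval fun i => C (X i) + ∑ t ∈ u, X t * C (nn A ι ρ (c t) i)

lemma FF_X (u : Finset ℕ) (c : ℕ → A) (i : ι) :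
    FF A ι ρ u c (X i) = C (X i) + ∑ t ∈ u, X t * C (nn A ι ρ (c t) i) := by
  simp [FF]

lemma FF_C (u : Finset ℕ) (c : ℕ → A) (γ : ℂ) :
    FF A ι ρ u c (C γ) = C (C γ) := by
  rw [← MvPolynomial.algebraMap_eq, AlgHom.commutes, MvPolynomial.algebraMap_apply,
    MvPolynomial.algebraMap_eq]

lemma FF_congr {u : Finset ℕ} {c c' : ℕ → A} (h : ∀ t ∈ u, c t = c' t) (x : MvPolynomial ι ℂ) :
    FF A ι ρ u c x = FF A ι ρ u c' x := by
  have : (fun i => C (X i) + ∑ t ∈ u, X t * C (nn A ι ρ (c t) i))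
      = fun i => C (X i) + ∑ t ∈ u, X t * C (nn A ι ρ (c' t) i) := by
    funext i
    refine congrArg (C (X i) + ·) ?_
    exact Finset.sum_congr rfl fun t ht => by rw [h t ht]
  rw [FF, this, FF]

/-- The exponent finsupp of the squarefree monomial `∏_{t∈u} t_t`. -/
def ee (u : Finset ℕ) : ℕ →₀ ℕ := ∑ t ∈ u, Finsupp.single t 1

lemma ee_apply (u : Finset ℕ) (t : ℕ) : ee u t = if t ∈ u then 1 else 0 := by
  classical
  rw [ee, Finsupp.finset_sum_apply]
  simp [Finsupp.single_apply]

lemma ee_erase {u : Finset ℕ} {t : ℕ} (h : t ∈ u) :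
    ee u - Finsupp.single t 1 = ee (u.erase t) := by
  classical
  ext s
  rw [Finsupp.tsub_apply, ee_apply, ee_apply, Finsupp.single_apply]
  by_cases hs : s = t
  · subst hs; simp [h]
  · simp [hs, Ne.symm hs, Finset.mem_erase]

lemma ee_eq_zero_iff (u : Finset ℕ) : ee u = 0 ↔ u = ∅ := by
  constructor
  · intro h
    by_contra hu
    obtain ⟨t, ht⟩ := Finset.nonempty_iff_ne_empty.mpr hu
    have := congrArg (fun f => f t) h
    simp [ee_apply, ht] at this
  · rintro rfl; simp [ee]

lemma ee_mem_support {u : Finset ℕ} {t : ℕ} (h : t ∈ u) : t ∈ (ee u).support := by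
  rw [Finsupp.mem_support_iff, ee_apply]
  simp [h]

/-- Extraction of the coefficient of the squarefree monomial `∏_{t∈u} t_t`. -/
def ex (u : Finset ℕ) : BigR ι →ₗ[ℂ] MvPolynomial ι ℂ where
  toFun p := coeff (ee u) p
  map_add' p q := coeff_add _ p q
  map_smul' c p := coeff_smul _ c p

lemma ex_apply (u : Finset ℕ) (p : BigR ι) : ex ι u p = coeff (ee u) p := rfl

lemma ex_mul_C (u : Finset ℕ) (p : BigR ι) (q : MvPolynomial ι ℂ) :
    ex ι u (p * C q) = ex ι u p * q := by
  rw [ex_apply, ex_apply, mul_comm p (C q), coeff_C_mul, mul_comm]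

lemma ex_mul_X {u : Finset ℕ} {t : ℕ} (h : t ∈ u) (p : BigR ι) (q : MvPolynomial ι ℂ) :
    ex ι u (p * (X t * C q)) = ex ι (u.erase t) p * q := by
  classical
  have h1 : p * (X t * C q) = p * C q * X t := by ring
  rw [ex_apply, h1, coeff_mul_X', if_pos (ee_mem_support h), ee_erase h]
  rw [mul_comm (p) (C q), coeff_C_mul, mul_comm]
  rfl

lemma ex_mul_X' {u : Finset ℕ} {t : ℕ} (h : t ∉ u) (p : BigR ι) (q : MvPolynomial ι ℂ) :
    ex ι u (p * (X t * C q)) = 0 := by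
  classical
  have h1 : p * (X t * C q) = p * C q * X t := by ring
  rw [ex_apply, h1, coeff_mul_X', if_neg]
  intro hmem
  rw [Finsupp.mem_support_iff, ee_apply, if_neg h] at hmem
  exact hmem rfl

lemma ex_CC (u : Finset ℕ) (q : MvPolynomial ι ℂ) :
    ex ι u (C q) = if u = ∅ then q else 0 := by
  rw [ex_apply, coeff_C]
  by_cases h : u = ∅
  · subst h
    simp [ee]
  · rw [if_neg h, if_neg]
    intro h0
    exact h ((ee_eq_zero_iff u).mp h0.symm)


lemma ex_mul_gen (u w : Finset ℕ) (c : ℕ → A) (P : BigR ι) (i : ι) :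
    ex ι u (P * FF A ι ρ w c (X i))
      = ex ι u P * X i + ∑ t ∈ u ∩ w, ex ι (u.erase t) P * nn A ι ρ (c t) i := by
  classical
  rw [FF_X, mul_add, Finset.mul_sum, map_add, map_sum, ex_mul_C]
  congr 1
  have h : ∀ t ∈ w, ex ι u (P * (X t * C (nn A ι ρ (c t) i)))
      = if t ∈ u then ex ι (u.erase t) P * nn A ι ρ (c t) i else 0 := by
    intro t _
    by_cases h : t ∈ u
    · rw [if_pos h, ex_mul_X ι h]
    · rw [if_neg h, ex_mul_X' ι h]
  rw [Finset.sum_congr rfl h, Finset.sum_ite_mem, Finset.inter_comm]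

lemma extra (c : ℕ → A) (x : MvPolynomial ι ℂ) :
    ∀ u v : Finset ℕ, v ⊆ u → ex ι v (FF A ι ρ u c x) = ex ι v (FF A ι ρ v c x) := by
  induction x using MvPolynomial.induction_on with
  | C γ => intro u v hv; rw [FF_C, FF_C]
  | add p q hp hq =>
      intro u v hv
      rw [map_add, map_add, map_add, map_add, hp u v hv, hq u v hv]
  | mul_X p i hp =>
      intro u v hv
      rw [map_mul (FF A ι ρ u c) p (X i)]
      rw [map_mul (FF A ι ρ v c) p (X i)]
      rw [ex_mul_gen A ι ρ v u c (FF A ι ρ u c p) i]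
      rw [ex_mul_gen A ι ρ v v c (FF A ι ρ v c p) i]
      rw [Finset.inter_self]
      rw [Finset.inter_eq_left.mpr hv]
      rw [hp u v hv]
      exact congrArg (_ + ·) (Finset.sum_congr rfl fun t ht => by
        rw [hp u (v.erase t) ((Finset.erase_subset _ _).trans hv),
          hp v (v.erase t) (Finset.erase_subset _ _)])


set_option maxHeartbeats 1000000 in
lemma I2 (t₀ : ℕ) (c : ℕ → A) (a : A) :
    ∀ u : Finset ℕ, t₀ ∉ u → ∀ x : MvPolynomial ι ℂ,
      Der A ι ρ a (ex ι u (FF A ι ρ u c x))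
        = ex ι (insert t₀ u) (FF A ι ρ (insert t₀ u) (Function.update c t₀ a) x)
          + ∑ t ∈ u, ex ι u (FF A ι ρ u (Function.update c t (a * c t)) x) := by
  classical
  intro u
  induction u using Finset.strongInduction with
  | _ u ih =>
    intro h₀ x
    induction x using MvPolynomial.induction_on with
    | C γ =>
        rw [FF_C, ex_CC]
        by_cases hu : u = ∅
        · subst hu
          simp [FF_C, ex_CC, der_C]
        · simp [FF_C, ex_CC, hu, der_C]
    | add p q hp hq =>
        rw [map_add (FF A ι ρ u c) p q, map_add (ex ι u), map_add (Der A ι ρ a), hp, hq]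
        rw [map_add (FF A ι ρ (insert t₀ u) (Function.update c t₀ a)) p q,
          map_add (ex ι (insert t₀ u))]
        rw [show (∑ t ∈ u, ex ι u (FF A ι ρ u (Function.update c t (a * c t)) (p + q)))
            = (∑ t ∈ u, ex ι u (FF A ι ρ u (Function.update c t (a * c t)) p))
              + (∑ t ∈ u, ex ι u (FF A ι ρ u (Function.update c t (a * c t)) q)) from by
          rw [← Finset.sum_add_distrib]
          exact Finset.sum_congr rfl fun t ht => by
            rw [map_add (FF A ι ρ u (Function.update c t (a * c t))) p q,
              map_add (ex ι u)]]
        abel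
    | mul_X p i hp =>
        -- Notation (all literal):
        -- E, the common normal form.
        trans (ex ι (insert t₀ u) (FF A ι ρ (insert t₀ u) (Function.update c t₀ a) p) * X i
            + (∑ t ∈ u, ex ι u (FF A ι ρ u (Function.update c t (a * c t)) p) * X i)
            + ex ι u (FF A ι ρ u c p) * nn A ι ρ a i
            + (∑ t ∈ u, ex ι (insert t₀ (u.erase t))
                (FF A ι ρ (insert t₀ (u.erase t)) (Function.update c t₀ a) p) * nn A ι ρ (c t) i)
            + (∑ t ∈ u, ∑ s ∈ u.erase t, ex ι (u.erase t)
                (FF A ι ρ (u.erase t) (Function.update c s (a * c s)) p) * nn A ι ρ (c t) i)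
            + (∑ t ∈ u, ex ι (u.erase t) (FF A ι ρ (u.erase t) c p) * nn A ι ρ (a * c t) i))
        · -- LHS = E
          rw [map_mul (FF A ι ρ u c) p (X i),
            ex_mul_gen A ι ρ u u c (FF A ι ρ u c p) i, Finset.inter_self]
          rw [show (∑ t ∈ u, ex ι (u.erase t) (FF A ι ρ u c p) * nn A ι ρ (c t) i)
              = ∑ t ∈ u, ex ι (u.erase t) (FF A ι ρ (u.erase t) c p) * nn A ι ρ (c t) i from
            Finset.sum_congr rfl fun t ht => by
              rw [extra A ι ρ c p u (u.erase t) (Finset.erase_subset _ _)]]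
          rw [map_add (Der A ι ρ a), Derivation.leibniz, der_X, smul_eq_mul, smul_eq_mul,
            map_sum (Der A ι ρ a), hp]
          rw [show (∑ t ∈ u, Der A ι ρ a
                (ex ι (u.erase t) (FF A ι ρ (u.erase t) c p) * nn A ι ρ (c t) i))
              = ∑ t ∈ u, (ex ι (insert t₀ (u.erase t))
                    (FF A ι ρ (insert t₀ (u.erase t)) (Function.update c t₀ a) p) * nn A ι ρ (c t) i
                  + (∑ s ∈ u.erase t, ex ι (u.erase t)
                      (FF A ι ρ (u.erase t) (Function.update c s (a * c s)) p) * nn A ι ρ (c t) i)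
                  + ex ι (u.erase t) (FF A ι ρ (u.erase t) c p) * nn A ι ρ (a * c t) i) from
            Finset.sum_congr rfl fun t ht => by
              rw [Derivation.leibniz, der_nn, smul_eq_mul, smul_eq_mul,
                ih (u.erase t) (Finset.erase_ssubset ht)
                  (fun hm => h₀ (Finset.mem_of_mem_erase hm)) p]
              rw [mul_add, mul_comm (nn A ι ρ (c t) i), mul_comm (nn A ι ρ (c t) i),
                Finset.sum_mul]
              abel]
          rw [mul_add (X i), mul_comm (X i), mul_comm (X i), Finset.sum_mul,
            Finset.sum_add_distrib, Finset.sum_add_distrib]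
          abel
        · -- E = RHS
          symm
          rw [map_mul (FF A ι ρ (insert t₀ u) (Function.update c t₀ a)) p (X i),
            ex_mul_gen A ι ρ (insert t₀ u) (insert t₀ u) (Function.update c t₀ a)
              (FF A ι ρ (insert t₀ u) (Function.update c t₀ a) p) i, Finset.inter_self,
            Finset.sum_insert h₀]
          -- diagonal t₀-term of the first sum
          rw [show ex ι ((insert t₀ u).erase t₀)
                (FF A ι ρ (insert t₀ u) (Function.update c t₀ a) p)
                  * nn A ι ρ (Function.update c t₀ a t₀) i
              = ex ι u (FF A ι ρ u c p) * nn A ι ρ a i from by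
            rw [Finset.erase_insert h₀, Function.update_self,
              extra A ι ρ (Function.update c t₀ a) p (insert t₀ u) u (Finset.subset_insert _ _),
              FF_congr A ι ρ (fun t ht => Function.update_of_ne
                (ne_of_mem_of_not_mem ht h₀) a c) p]]
          -- remaining part of the first sum
          rw [show (∑ s ∈ u, ex ι ((insert t₀ u).erase s)
                (FF A ι ρ (insert t₀ u) (Function.update c t₀ a) p)
                  * nn A ι ρ (Function.update c t₀ a s) i)
              = ∑ s ∈ u, ex ι (insert t₀ (u.erase s))
                  (FF A ι ρ (insert t₀ (u.erase s)) (Function.update c t₀ a) p)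
                    * nn A ι ρ (c s) i from
            Finset.sum_congr rfl fun s hs => by
              rw [Finset.erase_insert_of_ne (ne_of_mem_of_not_mem hs h₀).symm,
                Function.update_of_ne (ne_of_mem_of_not_mem hs h₀) a c,
                extra A ι ρ (Function.update c t₀ a) p (insert t₀ u) (insert t₀ (u.erase s))
                  (Finset.insert_subset_insert _ (Finset.erase_subset _ _))]]
          -- the second family
          rw [show (∑ t ∈ u, ex ι u (FF A ι ρ u (Function.update c t (a * c t)) (p * X i)))
              = ∑ t ∈ u, (ex ι u (FF A ι ρ u (Function.update c t (a * c t)) p) * X i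
                  + (ex ι (u.erase t) (FF A ι ρ (u.erase t) c p) * nn A ι ρ (a * c t) i
                    + ∑ s ∈ u.erase t, ex ι (u.erase s)
                        (FF A ι ρ (u.erase s) (Function.update c t (a * c t)) p)
                          * nn A ι ρ (c s) i)) from
            Finset.sum_congr rfl fun t ht => by
              rw [map_mul (FF A ι ρ u (Function.update c t (a * c t))) p (X i),
                ex_mul_gen A ι ρ u u (Function.update c t (a * c t))
                  (FF A ι ρ u (Function.update c t (a * c t)) p) i, Finset.inter_self,
                ← Finset.add_sum_erase u (fun s => ex ι (u.erase s)
                    (FF A ι ρ u (Function.update c t (a * c t)) p)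
                      * nn A ι ρ (Function.update c t (a * c t) s) i) ht]
              rw [show ex ι (u.erase t) (FF A ι ρ u (Function.update c t (a * c t)) p)
                    * nn A ι ρ (Function.update c t (a * c t) t) i
                  = ex ι (u.erase t) (FF A ι ρ (u.erase t) c p) * nn A ι ρ (a * c t) i from by
                rw [Function.update_self,
                  extra A ι ρ (Function.update c t (a * c t)) p u (u.erase t)
                    (Finset.erase_subset _ _),
                  FF_congr A ι ρ (fun s hs =>
                    Function.update_of_ne (Finset.ne_of_mem_erase hs) (a * c t) c) p]]
              rw [show (∑ s ∈ u.erase t, ex ι (u.erase s)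
                    (FF A ι ρ u (Function.update c t (a * c t)) p)
                      * nn A ι ρ (Function.update c t (a * c t) s) i)
                  = ∑ s ∈ u.erase t, ex ι (u.erase s)
                      (FF A ι ρ (u.erase s) (Function.update c t (a * c t)) p)
                        * nn A ι ρ (c s) i from
                Finset.sum_congr rfl fun s hs => by
                  rw [Function.update_of_ne (Finset.ne_of_mem_erase hs) (a * c t) c,
                    extra A ι ρ (Function.update c t (a * c t)) p u (u.erase s)
                      (Finset.erase_subset _ _)]]]
          rw [Finset.sum_add_distrib, Finset.sum_add_distrib]
          -- swap the double sum
          rw [show (∑ t ∈ u, ∑ s ∈ u.erase t, ex ι (u.erase s)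
                (FF A ι ρ (u.erase s) (Function.update c t (a * c t)) p) * nn A ι ρ (c s) i)
              = ∑ t ∈ u, ∑ s ∈ u.erase t, ex ι (u.erase t)
                  (FF A ι ρ (u.erase t) (Function.update c s (a * c s)) p) * nn A ι ρ (c t) i from by
            refine Finset.sum_comm' ?_
            intro x y
            constructor
            · rintro ⟨hx, hy⟩
              exact ⟨Finset.mem_erase.mpr ⟨Ne.symm (Finset.ne_of_mem_erase hy), hx⟩,
                Finset.mem_of_mem_erase hy⟩
            · rintro ⟨hx, hy⟩
              exact ⟨Finset.mem_of_mem_erase hx,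
                Finset.mem_erase.mpr ⟨Ne.symm (Finset.ne_of_mem_erase hx), hy⟩⟩]
          abel


lemma ee_degree (u : Finset ℕ) : Finsupp.degree (ee u) = u.card := by
  classical
  rw [Finsupp.degree_eq_weight_one, ee, map_sum]
  have h : ∀ t : ℕ, Finsupp.weight (1 : ℕ → ℕ) (Finsupp.single t 1) = 1 := fun t => by
    rw [Finsupp.weight_apply, Finsupp.sum_single_index] <;> simp
  exact (Finset.sum_congr rfl fun t _ => h t).trans (by simp)

lemma FF_X_deg (u : Finset ℕ) (c : ℕ → A) (i : ι) :
    (FF A ι ρ u c (X i)).totalDegree ≤ 1 := by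
  rw [FF_X]
  refine le_trans (totalDegree_add _ _) (max_le ?_ ?_)
  · simp [totalDegree_C]
  · refine le_trans (totalDegree_finset_sum _ _) (Finset.sup_le fun t ht => ?_)
    refine le_trans (totalDegree_mul _ _) ?_
    rw [totalDegree_X, totalDegree_C]

lemma tdeg (u : Finset ℕ) (c : ℕ → A) (m : ι →₀ ℕ) (γ : ℂ) :
    (FF A ι ρ u c (monomial m γ)).totalDegree ≤ Finsupp.degree m := by
  rw [monomial_eq, map_mul, FF_C]
  refine le_trans (totalDegree_mul _ _) ?_
  rw [totalDegree_C, zero_add, Finsupp.prod, map_prod]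
  refine le_trans (totalDegree_finset_prod _ _) ?_
  rw [Finsupp.degree]
  refine Finset.sum_le_sum fun n hn => ?_
  rw [map_pow]
  refine le_trans (totalDegree_pow _ _) ?_
  calc m n * (FF A ι ρ u c (X n)).totalDegree ≤ m n * 1 :=
        Nat.mul_le_mul_left _ (FF_X_deg A ι ρ u c n)
    _ = m n := mul_one _

lemma van (d : ℕ) (u : Finset ℕ) (c : ℕ → A) (x : MvPolynomial ι ℂ)
    (hx : x.IsHomogeneous d) (h : d < u.card) :
    ex ι u (FF A ι ρ u c x) = 0 := by
  conv_lhs => rw [← support_sum_monomial_coeff x]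
  rw [map_sum (FF A ι ρ u c), map_sum (ex ι u)]
  refine Finset.sum_eq_zero fun m hm => ?_
  rw [ex_apply]
  by_contra hne
  have h1 : ((ee u).sum fun _ k => k) ≤ (FF A ι ρ u c (monomial m (coeff m x))).totalDegree :=
    le_totalDegree (Finsupp.mem_support_iff.mpr hne)
  have h2 := tdeg A ι ρ u c m (coeff m x)
  have h3 : Finsupp.degree m = d := by
    have := hx (MvPolynomial.mem_support_iff.mp hm)
    rw [Finsupp.degree_eq_weight_one]
    exact this
  have h4 : u.card ≤ (FF A ι ρ u c (monomial m (coeff m x))).totalDegree := by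
    rw [← ee_degree u]; exact h1
  omega

/-- The operator `semH u c = ex_u ∘ Φ_{u,c}`. -/
def semH (u : Finset ℕ) (c : ℕ → A) : Module.End ℂ (MvPolynomial ι ℂ) :=
  (ex ι u).comp (FF A ι ρ u c).toLinearMap

lemma semH_apply (u : Finset ℕ) (c : ℕ → A) (x : MvPolynomial ι ℂ) :
    semH A ι ρ u c x = ex ι u (FF A ι ρ u c x) := rfl

lemma sum_comp' {α : Type} {N : Type} [AddCommMonoid N] [Module ℂ N]
    (s : Finset α) (f : α → Module.End ℂ (MvPolynomial ι ℂ))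
    (g : N →ₗ[ℂ] MvPolynomial ι ℂ) :
    (∑ t ∈ s, f t) ∘ₗ g = ∑ t ∈ s, (f t ∘ₗ g) := by
  apply LinearMap.ext; intro x
  simp [LinearMap.sum_apply]

lemma I2op (u : Finset ℕ) (t₀ : ℕ) (h₀ : t₀ ∉ u) (c : ℕ → A) (a : A) :
    (Der A ι ρ a).toLinearMap ∘ₗ semH A ι ρ u c
      = semH A ι ρ (insert t₀ u) (Function.update c t₀ a)
        + ∑ t ∈ u, semH A ι ρ u (Function.update c t (a * c t)) := by
  apply LinearMap.ext; intro x
  have h := I2 A ι ρ t₀ c a u h₀ x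
  simpa [semH_apply, LinearMap.sum_apply] using h

lemma semH_empty (c : ℕ → A) : semH A ι ρ ∅ c = 1 := by
  apply LinearMap.ext; intro x
  show ex ι ∅ (FF A ι ρ ∅ c x) = x
  induction x using MvPolynomial.induction_on with
  | C γ => rw [FF_C, ex_CC, if_pos rfl]
  | add p q hp hq => rw [map_add (FF A ι ρ ∅ c) p q, map_add (ex ι ∅), hp, hq]
  | mul_X p i hp =>
      rw [map_mul (FF A ι ρ ∅ c) p (X i), ex_mul_gen A ι ρ ∅ ∅ c (FF A ι ρ ∅ c p) i, hp]
      simp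

lemma semH_van (d : ℕ) (u : Finset ℕ) (c : ℕ → A) (h : d < u.card) :
    semH A ι ρ u c ∘ₗ (homogeneousSubmodule ι ℂ d).subtype = 0 := by
  apply LinearMap.ext; rintro ⟨x, hx⟩
  exact van A ι ρ d u c x ((mem_homogeneousSubmodule d x).mp hx) h

lemma fresh_not_mem (u : Finset ℕ) : u.sup id + 1 ∉ u := fun h => by
  have h2 := Finset.le_sup (f := id) h
  simp only [id] at h2
  omega

lemma step1 (l : List A) :
    compDer A ι ρ l ∈ Submodule.span ℂ
      {g : Module.End ℂ (MvPolynomial ι ℂ) | ∃ u : Finset ℕ, ∃ c : ℕ → A,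
        u.card ≤ l.length ∧ g = semH A ι ρ u c} := by
  induction l with
  | nil =>
      apply Submodule.subset_span
      exact ⟨∅, fun _ => 1, by simp,
        by rw [semH_empty]; simp [compDer]⟩
  | cons a l ihl =>
      have hc : compDer A ι ρ (a :: l) = (Der A ι ρ a).toLinearMap ∘ₗ compDer A ι ρ l := by
        rw [compDer, List.map_cons, List.prod_cons, ← Module.End.mul_eq_comp]; rfl
      rw [hc]
      refine Submodule.span_induction
        (p := fun g _ => (Der A ι ρ a).toLinearMap ∘ₗ g ∈ Submodule.span ℂ
          {g : Module.End ℂ (MvPolynomial ι ℂ) | ∃ u : Finset ℕ, ∃ c : ℕ → A,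
            u.card ≤ (a :: l).length ∧ g = semH A ι ρ u c}) ?_ ?_ ?_ ?_ ihl
      · rintro g ⟨u, c, hcard, rfl⟩
        rw [I2op A ι ρ u (u.sup id + 1) (fresh_not_mem u) c a]
        refine Submodule.add_mem _ (Submodule.subset_span ?_)
          (Submodule.sum_mem _ fun t ht => Submodule.subset_span ?_)
        · refine ⟨insert (u.sup id + 1) u, Function.update c (u.sup id + 1) a, ?_, rfl⟩
          rw [Finset.card_insert_of_notMem (fresh_not_mem u), List.length_cons]
          omega
        · exact ⟨u, Function.update c t (a * c t), by simp; omega, rfl⟩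
      · simp only [LinearMap.comp_zero]; exact Submodule.zero_mem _
      · intro f g _ _ hf hg
        simp only [LinearMap.comp_add]; exact Submodule.add_mem _ hf hg
      · intro r f _ hf
        simp only [LinearMap.comp_smul]; exact Submodule.smul_mem _ _ hf

lemma Phi_cons (d : ℕ) (b : A) (l : List A) :
    Phi A ι ρ d (b :: l) = (Der A ι ρ b).toLinearMap ∘ₗ Phi A ι ρ d l := by
  rw [Phi, Phi, compDer, List.map_cons, List.prod_cons, Module.End.mul_eq_comp,
    LinearMap.comp_assoc]
  rfl

lemma step2 (d : ℕ) (u : Finset ℕ) :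
    ∀ c : ℕ → A, semH A ι ρ u c ∘ₗ (homogeneousSubmodule ι ℂ d).subtype ∈
      Submodule.span ℂ {φ | ∃ l : List A, l.length ≤ u.card ∧ φ = Phi A ι ρ d l} := by
  induction u using Finset.strongInduction with
  | _ u ih =>
    intro c
    rcases Finset.eq_empty_or_nonempty u with rfl | ⟨t₀, ht₀⟩
    · apply Submodule.subset_span
      refine ⟨[], by simp, ?_⟩
      rw [semH_empty, Module.End.one_eq_id, LinearMap.id_comp, Phi, compDer]
      simp [Module.End.one_eq_id]
    · have h₀ : t₀ ∉ u.erase t₀ := Finset.notMem_erase _ _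
      have key := I2op A ι ρ (u.erase t₀) t₀ h₀ c (c t₀)
      rw [Finset.insert_erase ht₀, Function.update_eq_self] at key
      have hsem : semH A ι ρ u c
          = (Der A ι ρ (c t₀)).toLinearMap ∘ₗ semH A ι ρ (u.erase t₀) c
            - ∑ t ∈ u.erase t₀, semH A ι ρ (u.erase t₀) (Function.update c t (c t₀ * c t)) :=
        eq_sub_of_add_eq key.symm
      have hcard : (u.erase t₀).card + 1 ≤ u.card := by
        rw [Finset.card_erase_of_mem ht₀]
        have := Finset.card_pos.mpr ⟨t₀, ht₀⟩
        omega
      rw [hsem, LinearMap.sub_comp, sum_comp']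
      refine Submodule.sub_mem _ ?_ (Submodule.sum_mem _ fun t ht => ?_)
      · rw [LinearMap.comp_assoc]
        refine Submodule.span_induction
          (p := fun g _ => (Der A ι ρ (c t₀)).toLinearMap ∘ₗ g ∈ Submodule.span ℂ
            {φ | ∃ l : List A, l.length ≤ u.card ∧ φ = Phi A ι ρ d l}) ?_ ?_ ?_ ?_
          (ih (u.erase t₀) (Finset.erase_ssubset ht₀) c)
        · rintro g ⟨l', hl', rfl⟩
          rw [← Phi_cons]
          exact Submodule.subset_span ⟨c t₀ :: l', by simp; omega, rfl⟩
        · simp only [LinearMap.comp_zero]; exact Submodule.zero_mem _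
        · intro f g _ _ hf hg
          simp only [LinearMap.comp_add]; exact Submodule.add_mem _ hf hg
        · intro r f _ hf
          simp only [LinearMap.comp_smul]; exact Submodule.smul_mem _ _ hf
      · refine Submodule.span_mono
          (fun φ hφ => ?_) (ih (u.erase t₀) (Finset.erase_ssubset ht₀)
            (Function.update c t (c t₀ * c t)))
        obtain ⟨l', hl', hφ'⟩ := hφ
        exact ⟨l', by omega, hφ'⟩


theorem enveloping_action_degree_bound (d : ℕ) (hd : 1 ≤ d) :
    Submodule.span ℂ {φ : (MvPolynomial.homogeneousSubmodule ι ℂ d) →ₗ[ℂ]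
        MvPolynomial ι ℂ | ∃ l : List A, φ = Phi A ι ρ d l} =
      Submodule.span ℂ {φ | ∃ l : List A, l.length ≤ d ∧ φ = Phi A ι ρ d l} := by
  apply le_antisymm
  · rw [Submodule.span_le]
    rintro φ ⟨l, rfl⟩
    rw [SetLike.mem_coe]
    have h2 : Phi A ι ρ d l = compDer A ι ρ l ∘ₗ (homogeneousSubmodule ι ℂ d).subtype := rfl
    rw [h2]
    refine Submodule.span_induction
      (p := fun g _ => g ∘ₗ (homogeneousSubmodule ι ℂ d).subtype ∈ Submodule.span ℂ
        {φ : (homogeneousSubmodule ι ℂ d) →ₗ[ℂ] MvPolynomial ι ℂ |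
          ∃ l : List A, l.length ≤ d ∧ φ = Phi A ι ρ d l}) ?_ ?_ ?_ ?_ (step1 A ι ρ l)
    · rintro g ⟨u, c, hcard, rfl⟩
      by_cases hud : u.card ≤ d
      · refine Submodule.span_mono (fun ψ hψ => ?_) (step2 A ι ρ d u c)
        obtain ⟨l', hl', h'⟩ := hψ
        exact ⟨l', hl'.trans hud, h'⟩
      · rw [semH_van A ι ρ d u c (by omega)]
        exact Submodule.zero_mem _
    · simp only [LinearMap.zero_comp]; exact Submodule.zero_mem _
    · intro f g _ _ hf hg
      simp only [LinearMap.add_comp]; exact Submodule.add_mem _ hf hg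
    · intro r f _ hf
      simp only [LinearMap.smul_comp]; exact Submodule.smul_mem _ _ hf
  · exact Submodule.span_mono fun φ hφ => by obtain ⟨l, _, h⟩ := hφ; exact ⟨l, h⟩

end
end

section
/- In the Z/2Z-orbifold of the rank one Heisenberg vertex algebra H (generator α with OPE α(z)α(w) ~ (z-w)^{-2}, involution θ(α) = -α), the weight-6 normally ordered relation :ω_{0,0} ω_{1,1}: - :ω_{0,1} ω_{0,1}: = (7/6) ω_{3,1} - (1/12) ω_{4,0} holds, where ω_{i,j} = :(∂^i α)(∂^j α):. Consequently, ω_{4,0} can be expressed as a normally ordered polynomial in ω_{0,0}, ω_{2,0} and their derivatives: ω_{0,4} = -(2/5) :ω_{0,0} ∂²ω_{0,0}: + (4/5) :ω_{0,0} ω_{2,0}: + (1/5) :∂ω_{0,0} ∂ω_{0,0}: + (7/5) ∂²ω_{2,0} - (7/30) ∂⁴ω_{0,0}. -/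
/-- The translation operator `∂a = a_{(-2)}𝟙`. -/
def VertexAlg.D {R : Type} [CommRing R] {V : Type} [AddCommGroup V] [Module R V]
    (Va : VertexAlg R V) : V → V := fun a => Va.mul (-2) a Va.one

namespace HW6

variable {V : Type} [AddCommGroup V] [Module ℂ V] (Va : VertexAlg ℂ V)

lemma zsm (z : ℤ) (v : V) : z • v = (z : ℂ) • v := (Int.cast_smul_eq_zsmul ℂ z v).symm

lemma mulL (n : ℤ) (c : ℂ) (a b : V) : Va.mul n (c • a) b = c • Va.mul n a b := by
  rw [map_smul, LinearMap.smul_apply]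

lemma mulR (n : ℤ) (c : ℂ) (a b : V) : Va.mul n a (c • b) = c • Va.mul n a b :=
  map_smul _ _ _

lemma mulL0 (n : ℤ) (b : V) : Va.mul n (0 : V) b = 0 := by
  rw [map_zero, LinearMap.zero_apply]

lemma mulR0 (n : ℤ) (a : V) : Va.mul n a (0 : V) = 0 := map_zero _

lemma mulLadd (n : ℤ) (a a' b : V) :
    Va.mul n (a + a') b = Va.mul n a b + Va.mul n a' b := by
  rw [map_add, LinearMap.add_apply]

lemma mulRadd (n : ℤ) (a b b' : V) :
    Va.mul n a (b + b') = Va.mul n a b + Va.mul n a b' := map_add _ _ _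

lemma D_def (a : V) : Va.D a = Va.mul (-2) a Va.one := rfl

lemma D_zero : Va.D (0 : V) = 0 := by rw [D_def, mulL0]

lemma D_smul (c : ℂ) (a : V) : Va.D (c • a) = c • Va.D a := by
  rw [D_def, D_def, mulL]

lemma D_add (a b : V) : Va.D (a + b) = Va.D a + Va.D b := by
  rw [D_def, D_def, D_def, mulLadd]

lemma D_one : Va.D Va.one = 0 := by
  rw [D_def, Va.vacuum_left]; norm_num

lemma D_sum {ι : Type} (s : Finset ι) (f : ι → V) :
    Va.D (∑ i ∈ s, f i) = ∑ i ∈ s, Va.D (f i) := by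
  simp only [D_def, map_sum, LinearMap.coe_sum, Finset.sum_apply]

lemma Dk_zero (k : ℕ) : Va.D^[k] (0 : V) = 0 := by
  induction k with
  | zero => rfl
  | succ k ih => rw [Function.iterate_succ_apply, D_zero, ih]

lemma Dk_smul (k : ℕ) (c : ℂ) (a : V) : Va.D^[k] (c • a) = c • Va.D^[k] a := by
  induction k generalizing a with
  | zero => rfl
  | succ k ih => rw [Function.iterate_succ_apply, D_smul, ih, ← Function.iterate_succ_apply]

lemma Dk_one (k : ℕ) : Va.D^[k+1] Va.one = 0 := by
  rw [Function.iterate_succ_apply, D_one, Dk_zero]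

lemma fact_inv_succ (k : ℕ) :
    (((k+1).factorial : ℂ))⁻¹ = ((k:ℂ)+1)⁻¹ * ((k.factorial : ℂ))⁻¹ := by
  rw [Nat.factorial_succ]
  push_cast
  rw [mul_inv]

lemma neg_mode (k : ℕ) (a b : V) :
    Va.mul (-(k:ℤ)-1) a b = ((k.factorial : ℂ))⁻¹ • Va.mul (-1) (Va.D^[k] a) b := by
  induction k generalizing a with
  | zero => simp
  | succ k ih =>
    have h := Va.deriv_mul (-(k:ℤ)-1) a b
    rw [← D_def, ih (Va.D a), ← Function.iterate_succ_apply, zsm] at h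
    have heq : ((-(-(k:ℤ)-1) : ℤ) : ℂ) = ((k:ℂ)+1) := by push_cast; ring
    have hk1 : ((k:ℂ)+1) ≠ 0 := Nat.cast_add_one_ne_zero k
    rw [heq] at h
    have h2 : Va.mul (-(k:ℤ)-1-1) a b
        = ((k:ℂ)+1)⁻¹ • (((k.factorial : ℂ))⁻¹ • Va.mul (-1) (Va.D^[k+1] a) b) :=
      (eq_inv_smul_iff₀ hk1).mpr h.symm
    have e1 : (-((k+1:ℕ)):ℤ) - 1 = -(k:ℤ)-1-1 := by push_cast; ring
    rw [e1, h2, smul_smul, fact_inv_succ]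

lemma neg_mode_one (k : ℕ) (a : V) :
    Va.mul (-(k:ℤ)-1) a Va.one = ((k.factorial : ℂ))⁻¹ • Va.D^[k] a := by
  rw [neg_mode, Va.vacuum_create]

lemma D_neg_mode_one (k : ℕ) (x : V) :
    Va.D (Va.mul (-(k:ℤ)-1) x Va.one) = ((k:ℂ)+1) • Va.mul (-(k:ℤ)-2) x Va.one := by
  have e : (-(k:ℤ)-2) = (-((k+1:ℕ):ℤ)-1) := by push_cast; ring
  rw [neg_mode_one, e, neg_mode_one, D_smul, ← Function.iterate_succ_apply' Va.D k x,
    smul_smul, fact_inv_succ]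
  congr 1
  have hk : ((k:ℂ)+1) ≠ 0 := Nat.cast_add_one_ne_zero k
  have hf : ((k.factorial : ℂ)) ≠ 0 := Nat.cast_ne_zero.mpr k.factorial_ne_zero
  field_simp

lemma qaw (a b c : V) (N : ℕ) (ha : ∀ n : ℕ, N ≤ n → Va.mul n a c = 0)
    (hb : ∀ n : ℕ, N ≤ n → Va.mul n b c = 0) :
    Va.mul (-1) (Va.mul (-1) a b) c = Va.mul (-1) a (Va.mul (-1) b c) +
      ∑ n ∈ Finset.range N,
        (Va.mul (-(n:ℤ)-2) a (Va.mul n b c) + Va.mul (-(n:ℤ)-2) b (Va.mul n a c)) := by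
  have h := Va.quasi_assoc a b c
  rw [finsum_eq_sum_of_support_subset _ (s := Finset.range N)
    (Function.support_subset_iff'.mpr ?_)] at h
  · rw [sub_eq_iff_eq_add] at h
    rw [h]; abel
  · intro n hn
    simp only [Finset.coe_range, Set.mem_Iio, not_lt] at hn
    rw [ha n hn, hb n hn, mulR0, mulR0, add_zero]

lemma commW (a b : V) (N : ℕ) (h : ∀ p : ℕ, N ≤ p → Va.mul p b a = 0) :
    Va.mul (-1) a b = Va.mul (-1) b a +
      ∑ p ∈ Finset.range N,
        ((-1:ℂ)^(p+1) * (((p+1).factorial : ℂ))⁻¹) • Va.D^[p+1] (Va.mul p b a) := by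
  have hskew := Va.skew (-1) a b
  set s : Finset ℤ := insert (-1 : ℤ) ((Finset.range N).image (Nat.cast : ℕ → ℤ)) with hs
  have hsupp : ∀ p : ℤ, p ∉ s →
      (((p + 1).negOnePow : ℤ) • Va.mul (-1 - p - 1) (Va.mul p b a) Va.one) = 0 := by
    intro p hp
    simp only [hs, Finset.mem_insert, Finset.mem_image, Finset.mem_range] at hp
    push_neg at hp
    obtain ⟨hp1, hp2⟩ := hp
    by_cases hneg : p < 0
    · rw [Va.vacuum_right (-1-p-1) (by omega), smul_zero]
    · push_neg at hneg
      have hz : Va.mul p b a = 0 := by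
        have hN : N ≤ p.toNat := by
          by_contra hc; push_neg at hc
          exact hp2 p.toNat hc (by omega)
        have := h p.toNat hN
        rwa [Int.toNat_of_nonneg hneg] at this
      rw [hz, mulL0, smul_zero]
  rw [finsum_eq_sum_of_support_subset _ (Function.support_subset_iff'.mpr hsupp)] at hskew
  rw [hs, Finset.sum_insert (by
    simp only [Finset.mem_image, Finset.mem_range, not_exists, not_and]
    intro x _
    omega)] at hskew
  rw [Finset.sum_image (fun x _ y _ hxy => by exact_mod_cast hxy)] at hskew
  have hfirst : ((-1 + 1 : ℤ).negOnePow : ℤ) • Va.mul (-1 - (-1) - 1) (Va.mul (-1) b a) Va.one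
      = Va.mul (-1) b a := by
    norm_num [Int.negOnePow_zero, Va.vacuum_create]
  rw [hfirst] at hskew
  rw [hskew]
  congr 1
  apply Finset.sum_congr rfl
  intro p _
  have e1 : (-1 - (p:ℤ) - 1) = -(((p+1:ℕ)):ℤ) - 1 := by push_cast; ring
  rw [e1, neg_mode_one, zsm, smul_smul]
  congr 1
  have e2 : ((p:ℤ) + 1) = ((p+1 : ℕ) : ℤ) := by push_cast; ring
  rw [e2, Int.coe_negOnePow_natCast]
  push_cast
  ring

lemma mul_D (n : ℤ) (a b : V) :
    Va.mul n a (Va.D b) = Va.D (Va.mul n a b) + (n : ℂ) • Va.mul (n-1) a b := by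
  obtain ⟨N₀, hN₀⟩ := Va.trunc b a
  set N : ℤ := max N₀ n with hNdef
  have hNn : n ≤ N := le_max_right _ _
  have hx : ∀ p : ℤ, N ≤ p → Va.mul p b a = 0 :=
    fun p hp => hN₀ p (le_trans (le_max_left _ _) hp)
  set s : Finset ℤ := Finset.Icc (n-1) (N-1) with hs
  set T : ℤ → V := fun q => Va.mul (n-q-2) (Va.mul q b a) Va.one with hT
  -- expansion of `mul (n-1) a b`
  have h3 : Va.mul (n-1) a b = ∑ q ∈ s, (((q+1).negOnePow : ℤ) : ℂ) • T q := by
    rw [Va.skew (n-1) a b]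
    rw [finsum_eq_sum_of_support_subset _ (s := s) (Function.support_subset_iff'.mpr ?_)]
    · apply Finset.sum_congr rfl
      intro q _
      have e : n - 1 - q - 1 = n - q - 2 := by ring
      rw [e, zsm, hT]
    · intro p hp
      rw [hs, Finset.coe_Icc, Set.mem_Icc, not_and_or, not_le, not_le] at hp
      rcases hp with h1 | h1
      · rw [Va.vacuum_right (n-1-p-1) (by omega), smul_zero]
      · rw [hx p (by omega), mulL0, smul_zero]
  -- expansion of `mul n a b` over the same window
  have hA : Va.mul n a b = ∑ q ∈ s, (((q+1).negOnePow : ℤ) : ℂ) •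
      Va.mul (n-q-1) (Va.mul q b a) Va.one := by
    rw [Va.skew n a b]
    rw [finsum_eq_sum_of_support_subset _ (s := s) (Function.support_subset_iff'.mpr ?_)]
    · apply Finset.sum_congr rfl
      intro q _
      rw [zsm]
    · intro p hp
      rw [hs, Finset.coe_Icc, Set.mem_Icc, not_and_or, not_le, not_le] at hp
      rcases hp with h1 | h1
      · rw [Va.vacuum_right (n-p-1) (by omega), smul_zero]
      · rw [hx p (by omega), mulL0, smul_zero]
  have h2 : Va.D (Va.mul n a b) = ∑ q ∈ s, (((q+1).negOnePow : ℤ) : ℂ) •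
      (((q+1-n : ℤ) : ℂ) • T q) := by
    rw [hA, D_sum]
    apply Finset.sum_congr rfl
    intro q hq
    rw [D_smul]
    congr 1
    have hq1 : n - 1 ≤ q := (Finset.mem_Icc.mp hq).1
    rcases eq_or_lt_of_le hq1 with heq | hlt
    · have e1 : n - q - 1 = 0 := by omega
      have e2 : q + 1 - n = 0 := by omega
      rw [e1, e2, Va.vacuum_right 0 le_rfl, D_zero]
      norm_num
    · set k : ℕ := (q - n).toNat with hk
      have hkq : (k : ℤ) = q - n := Int.toNat_of_nonneg (by omega)
      have e1 : n - q - 1 = -(k:ℤ) - 1 := by omega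
      have e2 : n - q - 2 = -(k:ℤ) - 2 := by omega
      rw [e1, D_neg_mode_one]
      simp only [hT]
      rw [e2]
      congr 1
      have : ((q + 1 - n : ℤ) : ℂ) = (k : ℂ) + 1 := by
        rw [show q + 1 - n = (k:ℤ) + 1 by omega]
        push_cast; ring
      rw [this]
  -- expansion of `mul n a (D b)`
  have h1 : Va.mul n a (Va.D b) = ∑ q ∈ s, (((q+1).negOnePow : ℤ) : ℂ) •
      (((q+1 : ℤ) : ℂ) • T q) := by
    rw [Va.skew n a (Va.D b)]
    have hterm : ∀ p : ℤ, (((p + 1).negOnePow : ℤ) •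
        Va.mul (n - p - 1) (Va.mul p (Va.D b) a) Va.one) =
        (((p+1).negOnePow : ℤ) : ℂ) • (((-p : ℤ) : ℂ) •
          Va.mul (n - p - 1) (Va.mul (p-1) b a) Va.one) := by
      intro p
      rw [D_def, Va.deriv_mul, zsm (-p), mulL, zsm]
    rw [finsum_congr hterm]
    rw [finsum_eq_sum_of_support_subset _ (s := Finset.Icc n N)
      (Function.support_subset_iff'.mpr ?_)]
    · have hmap : Finset.Icc n N = Finset.map (addRightEmbedding 1) s := by
        rw [hs, Finset.map_add_right_Icc]
        congr 1 <;> ring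
      rw [hmap, Finset.sum_map]
      apply Finset.sum_congr rfl
      intro q _
      simp only [addRightEmbedding_apply, hT]
      have e1 : n - (q + 1) - 1 = n - q - 2 := by ring
      have e2 : q + 1 - 1 = q := by ring
      rw [e1, e2, smul_smul, smul_smul]
      congr 1
      have e3 : (q + 1) + 1 = (q + 1) + 1 := rfl
      rw [show ((q+1)+1 : ℤ).negOnePow = -((q+1).negOnePow) from Int.negOnePow_succ _]
      push_cast
      ring
    · intro p hp
      rw [Finset.coe_Icc, Set.mem_Icc, not_and_or, not_le, not_le] at hp
      rcases hp with h1 | h1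
      · rw [Va.vacuum_right (n-p-1) (by omega), smul_zero, smul_zero]
      · rw [hx (p-1) (by omega), mulL0, smul_zero, smul_zero]
  rw [h1, h2, h3, Finset.smul_sum, ← Finset.sum_add_distrib]
  apply Finset.sum_congr rfl
  intro q _
  rw [smul_smul, smul_smul, smul_smul, ← add_smul]
  congr 1
  push_cast
  ring

section Heis

variable (α : V) (hα1 : Va.mul 1 α α = Va.one)
  (hα0 : ∀ n : ℤ, 0 ≤ n → n ≠ 1 → Va.mul n α α = 0)

include hα1 hα0

lemma C1 : ∀ (j m : ℕ), Va.mul m α (Va.D^[j] α) =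
    (if m = j+1 then (((j+1).factorial : ℂ)) else 0) • Va.one := by
  intro j
  induction j with
  | zero =>
    intro m
    rw [Function.iterate_zero_apply]
    rcases eq_or_ne m 1 with h | h
    · subst h; rw [show ((1:ℕ):ℤ) = (1:ℤ) by norm_num, hα1]; norm_num
    · rw [hα0 m (Int.natCast_nonneg m) (by exact_mod_cast h)]
      rw [if_neg (by omega), zero_smul]
  | succ j ih =>
    intro m
    rw [Function.iterate_succ_apply', mul_D, ih m, D_smul, D_one, smul_zero, zero_add]
    cases m with
    | zero =>
      norm_num
    | succ m =>
      have e : ((m+1 : ℕ) : ℤ) - 1 = ((m : ℕ) : ℤ) := by push_cast; ring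
      rw [e, ih m, smul_smul]
      rcases eq_or_ne m (j+1) with h | h
      · subst h
        rw [if_pos rfl, if_pos (by omega)]
        congr 1
        rw [Nat.factorial_succ (j+1)]
        push_cast
        ring
      · rw [if_neg h, if_neg (by omega), mul_zero]

lemma C3 : ∀ (i j p : ℕ), Va.mul p (Va.D^[i] α) (Va.D^[j] α) =
    (if p = i+j+1 then ((-1:ℂ)^i * (((i+j+1).factorial : ℂ))) else 0) • Va.one := by
  intro i
  induction i with
  | zero =>
    intro j p
    rw [Function.iterate_zero_apply, C1 Va α hα1 hα0 j p]
    norm_num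
  | succ i ih =>
    intro j p
    rw [Function.iterate_succ_apply', D_def, Va.deriv_mul, zsm]
    cases p with
    | zero =>
      norm_num
    | succ p =>
      have e : ((p+1 : ℕ) : ℤ) - 1 = ((p : ℕ) : ℤ) := by push_cast; ring
      rw [e, ih j p, smul_smul]
      rcases eq_or_ne p (i+j+1) with h | h
      · subst h
        rw [if_pos rfl, if_pos (by omega)]
        congr 1
        rw [show i+1+j+1 = (i+j+1)+1 by ring, Nat.factorial_succ (i+j+1)]
        push_cast
        ring
      · rw [if_neg h, if_neg (by omega), mul_zero]

lemma C2 (k l m : ℕ) : Va.mul m α (Va.mul (-1) (Va.D^[k] α) (Va.D^[l] α)) =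
    (if m = k+1 then (((k+1).factorial : ℂ)) else 0) • Va.D^[l] α +
    (if m = l+1 then (((l+1).factorial : ℂ)) else 0) • Va.D^[k] α := by
  have h := Va.non_comm m α (Va.D^[k] α) (Va.D^[l] α)
  have hsum : ∑ i ∈ Finset.Icc 1 m, (m.choose i) •
      Va.mul ((i:ℤ)-1) (Va.mul ((m:ℤ)-(i:ℤ)) α (Va.D^[k] α)) (Va.D^[l] α) = 0 := by
    apply Finset.sum_eq_zero
    intro i hi
    obtain ⟨hi1, him⟩ := Finset.mem_Icc.mp hi
    have e : (m:ℤ) - (i:ℤ) = ((m - i : ℕ) : ℤ) := by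
      rw [Nat.cast_sub him]
    rw [e, C1 Va α hα1 hα0 k (m-i), mulL, Va.vacuum_left,
      if_neg (show ¬((i:ℤ) - 1 = -1) by omega), smul_zero, smul_zero]
  rw [hsum] at h
  rw [sub_sub] at h
  have h2 := sub_eq_zero.mp h
  rw [h2, C1 Va α hα1 hα0 k m, C1 Va α hα1 hα0 l m, mulL, mulR, Va.vacuum_left, if_pos rfl,
    Va.vacuum_create]

lemma SYM (i j : ℕ) : Va.mul (-1) (Va.D^[i] α) (Va.D^[j] α)
    = Va.mul (-1) (Va.D^[j] α) (Va.D^[i] α) := by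
  rw [commW Va (Va.D^[i] α) (Va.D^[j] α) (i+j+2) (fun p hp => by
    rw [C3 Va α hα1 hα0 j i p, if_neg (by omega), zero_smul])]
  rw [Finset.sum_eq_zero, add_zero]
  intro p _
  rw [C3 Va α hα1 hα0 j i p, Dk_smul, Dk_one, smul_zero, smul_zero]

lemma C5 (i j : ℕ) : Va.D (Va.mul (-1) (Va.D^[i] α) (Va.D^[j] α)) =
    Va.mul (-1) (Va.D^[i+1] α) (Va.D^[j] α) + Va.mul (-1) (Va.D^[i] α) (Va.D^[j+1] α) := by
  have h := mul_D Va (-1) (Va.D^[i] α) (Va.D^[j] α)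
  have h2 : Va.mul (-1) (Va.D^[i+1] α) (Va.D^[j] α)
      = Va.mul (-1-1) (Va.D^[i] α) (Va.D^[j] α) := by
    have h3 := Va.deriv_mul (-1) (Va.D^[i] α) (Va.D^[j] α)
    rw [← D_def, ← Function.iterate_succ_apply' Va.D i α, zsm] at h3
    rw [h3]
    norm_num
  rw [Function.iterate_succ_apply' Va.D j α, h2, h]
  push_cast
  rw [neg_one_smul]
  abel

omit hα1 hα0 in
lemma beta1_mode (n : ℤ) (x : V) :
    Va.mul n (Va.D^[1] α) x = (-(n:ℂ)) • Va.mul (n-1) α x := by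
  rw [Function.iterate_one, D_def, Va.deriv_mul, zsm]
  push_cast
  ring_nf

-- ω01 := mul(-1) α (D α),  ω11 := mul(-1) (D α) (D α)
lemma Cb1a (p : ℕ) : Va.mul p (Va.D^[1] α) α = (if p = 2 then (-2:ℂ) else 0) • Va.one := by
  have h := C3 Va α hα1 hα0 1 0 p
  rw [Function.iterate_zero_apply] at h
  rw [h]
  congr 1
  norm_num [Nat.factorial]

lemma Caw11 (m : ℕ) : Va.mul m α (Va.mul (-1) (Va.D^[1] α) (Va.D^[1] α))
    = (if m = 2 then (4:ℂ) else 0) • Va.D^[1] α := by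
  rw [C2 Va α hα1 hα0 1 1 m]
  rcases eq_or_ne m 2 with h | h
  · subst h
    norm_num [Nat.factorial]
    module
  · rw [if_neg h]
    norm_num
    exact fun h' => absurd h' h

lemma Caw01 (m : ℕ) : Va.mul m α (Va.mul (-1) α (Va.D^[1] α))
    = (if m = 1 then (1:ℂ) else 0) • Va.D^[1] α + (if m = 2 then (2:ℂ) else 0) • α := by
  have h := C2 Va α hα1 hα0 0 1 m
  rw [Function.iterate_zero_apply] at h
  rw [h]
  norm_num [Nat.factorial]

lemma Cb1w01 (p : ℕ) : Va.mul p (Va.D^[1] α) (Va.mul (-1) α (Va.D^[1] α))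
    = (if p = 2 then (-2:ℂ) else 0) • Va.D^[1] α + (if p = 3 then (-6:ℂ) else 0) • α := by
  rw [beta1_mode]
  cases p with
  | zero => norm_num
  | succ q =>
    have e : ((q+1 : ℕ) : ℤ) - 1 = ((q : ℕ) : ℤ) := by push_cast; ring
    rw [e, Caw01 Va α hα1 hα0 q, smul_add, smul_smul, smul_smul]
    rcases eq_or_ne q 1 with h | h
    · subst h; norm_num
    · rcases eq_or_ne q 2 with h2 | h2
      · subst h2; norm_num
      · rw [if_neg h, if_neg h2, if_neg (by omega), if_neg (by omega)]
        norm_num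

omit hα1 hα0 in
lemma dk31 : Va.D^[3] (Va.D^[1] α) = Va.D^[4] α := by
  rw [← Function.iterate_add_apply]

omit hα1 hα0 in
lemma dk21 : Va.D^[2] (Va.D^[1] α) = Va.D^[3] α := by
  rw [← Function.iterate_add_apply]

omit hα1 hα0 in
lemma negmode2 (a b : V) :
    Va.mul (-((1:ℕ):ℤ) - 2) a b = (2:ℂ)⁻¹ • Va.mul (-1) (Va.D^[2] a) b := by
  rw [show (-((1:ℕ):ℤ)-2) = (-((2:ℕ):ℤ)-1) by omega, neg_mode]
  norm_num [Nat.factorial]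

omit hα1 hα0 in
lemma negmode3 (a b : V) :
    Va.mul (-((2:ℕ):ℤ) - 2) a b = (6:ℂ)⁻¹ • Va.mul (-1) (Va.D^[3] a) b := by
  rw [show (-((2:ℕ):ℤ)-2) = (-((3:ℕ):ℤ)-1) by omega, neg_mode]
  norm_num [Nat.factorial]

omit hα1 hα0 in
lemma negmode4 (a b : V) :
    Va.mul (-((3:ℕ):ℤ) - 2) a b = (24:ℂ)⁻¹ • Va.mul (-1) (Va.D^[4] a) b := by
  rw [show (-((3:ℕ):ℤ)-2) = (-((4:ℕ):ℤ)-1) by omega, neg_mode]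
  norm_num [Nat.factorial]

-- instance values
lemma vb0 : Va.mul ((0:ℕ):ℤ) (Va.D^[1] α) α = 0 := by
  rw [Cb1a Va α hα1 hα0 0]; try norm_num
lemma vb1 : Va.mul ((1:ℕ):ℤ) (Va.D^[1] α) α = 0 := by
  rw [Cb1a Va α hα1 hα0 1]; try norm_num
lemma vb2 : Va.mul ((2:ℕ):ℤ) (Va.D^[1] α) α = (-2:ℂ) • Va.one := by
  rw [Cb1a Va α hα1 hα0 2]; try norm_num

lemma va0 : Va.mul ((0:ℕ):ℤ) α (Va.mul (-1) (Va.D^[1] α) (Va.D^[1] α)) = 0 := by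
  rw [Caw11 Va α hα1 hα0 0]; try norm_num
lemma va1 : Va.mul ((1:ℕ):ℤ) α (Va.mul (-1) (Va.D^[1] α) (Va.D^[1] α)) = 0 := by
  rw [Caw11 Va α hα1 hα0 1]; try norm_num
lemma va2 : Va.mul ((2:ℕ):ℤ) α (Va.mul (-1) (Va.D^[1] α) (Va.D^[1] α))
    = (4:ℂ) • Va.D^[1] α := by
  rw [Caw11 Va α hα1 hα0 2]; try norm_num

lemma wa0 : Va.mul ((0:ℕ):ℤ) α (Va.mul (-1) α (Va.D^[1] α)) = 0 := by
  rw [Caw01 Va α hα1 hα0 0]; try norm_num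
lemma wa1 : Va.mul ((1:ℕ):ℤ) α (Va.mul (-1) α (Va.D^[1] α)) = (1:ℂ) • Va.D^[1] α := by
  rw [Caw01 Va α hα1 hα0 1]; try norm_num
lemma wa2 : Va.mul ((2:ℕ):ℤ) α (Va.mul (-1) α (Va.D^[1] α)) = (2:ℂ) • α := by
  rw [Caw01 Va α hα1 hα0 2]; try norm_num
lemma wa3 : Va.mul ((3:ℕ):ℤ) α (Va.mul (-1) α (Va.D^[1] α)) = 0 := by
  rw [Caw01 Va α hα1 hα0 3]; try norm_num

lemma wb0 : Va.mul ((0:ℕ):ℤ) (Va.D^[1] α) (Va.mul (-1) α (Va.D^[1] α)) = 0 := by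
  rw [Cb1w01 Va α hα1 hα0 0]; try norm_num
lemma wb1 : Va.mul ((1:ℕ):ℤ) (Va.D^[1] α) (Va.mul (-1) α (Va.D^[1] α)) = 0 := by
  rw [Cb1w01 Va α hα1 hα0 1]; try norm_num
lemma wb2 : Va.mul ((2:ℕ):ℤ) (Va.D^[1] α) (Va.mul (-1) α (Va.D^[1] α))
    = (-2:ℂ) • Va.D^[1] α := by
  rw [Cb1w01 Va α hα1 hα0 2]; try norm_num
lemma wb3 : Va.mul ((3:ℕ):ℤ) (Va.D^[1] α) (Va.mul (-1) α (Va.D^[1] α))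
    = (-6:ℂ) • α := by
  rw [Cb1w01 Va α hα1 hα0 3]; try norm_num

lemma M3 : Va.mul (-1) (Va.D^[1] α) (Va.mul (-1) α (Va.D^[1] α))
    = Va.mul (-1) α (Va.mul (-1) (Va.D^[1] α) (Va.D^[1] α)) := by
  have hsym : Va.mul (-1) α (Va.D^[1] α) = Va.mul (-1) (Va.D^[1] α) α := by
    have h := SYM Va α hα1 hα0 0 1
    rwa [Function.iterate_zero_apply] at h
  have hvan : ∀ n : ℕ, 3 ≤ n → Va.mul n (Va.D^[1] α) α = 0 := by
    intro n hn; rw [Cb1a Va α hα1 hα0 n, if_neg (by omega), zero_smul]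
  have hq := qaw Va (Va.D^[1] α) (Va.D^[1] α) α 3 hvan hvan
  simp only [Finset.sum_range_succ, Finset.sum_range_zero, zero_add,
    vb0 Va α hα1 hα0, vb1 Va α hα1 hα0, vb2 Va α hα1 hα0,
    mulR0, mulR, add_zero, negmode3, Va.vacuum_create, dk31] at hq
  have hvan2 : ∀ p : ℕ, 3 ≤ p → Va.mul p α (Va.mul (-1) (Va.D^[1] α) (Va.D^[1] α)) = 0 := by
    intro p hp; rw [Caw11 Va α hα1 hα0 p, if_neg (by omega), zero_smul]
  have hcw := commW Va (Va.mul (-1) (Va.D^[1] α) (Va.D^[1] α)) α 3 hvan2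
  simp only [Finset.sum_range_succ, Finset.sum_range_zero, zero_add,
    va0 Va α hα1 hα0, va1 Va α hα1 hα0, va2 Va α hα1 hα0,
    Dk_zero, smul_zero, add_zero, Dk_smul, dk31] at hcw
  rw [show Va.D^[2+1] (Va.D^[1] α) = Va.D^[4] α by
    rw [← Function.iterate_add_apply]; try norm_num] at hcw
  rw [hsym, eq_sub_of_add_eq hq.symm, hcw]
  match_scalars <;> norm_num [Nat.factorial]

lemma M1 : Va.mul (-1) (Va.mul (-1) α α) (Va.mul (-1) (Va.D^[1] α) (Va.D^[1] α))
    = Va.mul (-1) α (Va.mul (-1) α (Va.mul (-1) (Va.D^[1] α) (Va.D^[1] α)))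
      + (4/3 : ℂ) • Va.mul (-1) (Va.D^[3] α) (Va.D^[1] α) := by
  have hvan : ∀ n : ℕ, 3 ≤ n → Va.mul n α (Va.mul (-1) (Va.D^[1] α) (Va.D^[1] α)) = 0 := by
    intro n hn; rw [Caw11 Va α hα1 hα0 n, if_neg (by omega), zero_smul]
  have hq := qaw Va α α (Va.mul (-1) (Va.D^[1] α) (Va.D^[1] α)) 3 hvan hvan
  simp only [Finset.sum_range_succ, Finset.sum_range_zero, zero_add,
    va0 Va α hα1 hα0, va1 Va α hα1 hα0, va2 Va α hα1 hα0,
    mulR0, mulR, add_zero, negmode3] at hq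
  rw [hq]
  match_scalars <;> norm_num

lemma M2 : Va.mul (-1) (Va.mul (-1) α (Va.D^[1] α)) (Va.mul (-1) α (Va.D^[1] α))
    = Va.mul (-1) α (Va.mul (-1) (Va.D^[1] α) (Va.mul (-1) α (Va.D^[1] α)))
      + (1/6 : ℂ) • Va.mul (-1) (Va.D^[3] α) (Va.D^[1] α)
      + (1/12 : ℂ) • Va.mul (-1) (Va.D^[4] α) α := by
  have hb : ∀ n : ℕ, 4 ≤ n → Va.mul n (Va.D^[1] α) (Va.mul (-1) α (Va.D^[1] α)) = 0 := by
    intro n hn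
    rw [Cb1w01 Va α hα1 hα0 n, if_neg (by omega), if_neg (by omega), zero_smul, zero_smul,
      add_zero]
  have ha : ∀ n : ℕ, 4 ≤ n → Va.mul n α (Va.mul (-1) α (Va.D^[1] α)) = 0 := by
    intro n hn
    rw [Caw01 Va α hα1 hα0 n, if_neg (by omega), if_neg (by omega), zero_smul, zero_smul,
      add_zero]
  have hq := qaw Va α (Va.D^[1] α) (Va.mul (-1) α (Va.D^[1] α)) 4 ha hb
  simp only [Finset.sum_range_succ, Finset.sum_range_zero, zero_add,
    wa0 Va α hα1 hα0, wa1 Va α hα1 hα0, wa2 Va α hα1 hα0, wa3 Va α hα1 hα0,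
    wb0 Va α hα1 hα0, wb1 Va α hα1 hα0, wb2 Va α hα1 hα0, wb3 Va α hα1 hα0,
    mulR0, mulR, add_zero, zero_add, negmode2, negmode3, negmode4, dk21, dk31] at hq
  rw [hq]
  match_scalars <;> norm_num

end Heis

end HW6

theorem heisenberg_weight_six_decoupling_relation
    (V : Type) [AddCommGroup V] [Module ℂ V] (Va : VertexAlg ℂ V)
    (α : V)
    -- the Heisenberg OPE `α(z)α(w) ~ (z-w)^{-2}`:
    (hα1 : Va.mul 1 α α = Va.one)
    (hα0 : ∀ n : ℤ, 0 ≤ n → n ≠ 1 → Va.mul n α α = 0) :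
    -- `ω_{i,j} = :(∂^i α)(∂^j α):`
    let ω : ℕ → ℕ → V := fun i j => Va.mul (-1) (Va.D^[i] α) (Va.D^[j] α)
    Va.mul (-1) (ω 0 0) (ω 1 1) - Va.mul (-1) (ω 0 1) (ω 0 1) =
        (7 / 6 : ℂ) • ω 3 1 - (1 / 12 : ℂ) • ω 4 0 ∧
    ω 0 4 =
      -(2 / 5 : ℂ) • Va.mul (-1) (ω 0 0) (Va.D^[2] (ω 0 0)) +
        (4 / 5 : ℂ) • Va.mul (-1) (ω 0 0) (ω 2 0) +
        (1 / 5 : ℂ) • Va.mul (-1) (Va.D (ω 0 0)) (Va.D (ω 0 0)) +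
        (7 / 5 : ℂ) • Va.D^[2] (ω 2 0) -
        (7 / 30 : ℂ) • Va.D^[4] (ω 0 0) := by

  have M1h := HW6.M1 Va α hα1 hα0
  have M2h := HW6.M2 Va α hα1 hα0
  have M3h := HW6.M3 Va α hα1 hα0
  have s01 := HW6.SYM Va α hα1 hα0 0 1
  have s02 := HW6.SYM Va α hα1 hα0 0 2
  have s13 := HW6.SYM Va α hα1 hα0 1 3
  have s04 := HW6.SYM Va α hα1 hα0 0 4
  simp only [Function.iterate_zero_apply] at s01 s02 s13 s04
  have c500 := HW6.C5 Va α hα1 hα0 0 0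
  have c501 := HW6.C5 Va α hα1 hα0 0 1
  have c502 := HW6.C5 Va α hα1 hα0 0 2
  have c503 := HW6.C5 Va α hα1 hα0 0 3
  have c511 := HW6.C5 Va α hα1 hα0 1 1
  have c512 := HW6.C5 Va α hα1 hα0 1 2
  have c520 := HW6.C5 Va α hα1 hα0 2 0
  have c521 := HW6.C5 Va α hα1 hα0 2 1
  have c530 := HW6.C5 Va α hα1 hα0 3 0
  simp only [Function.iterate_zero_apply, Nat.reduceAdd]
    at c500 c501 c502 c503 c511 c512 c520 c521 c530
  have hDw00 := c500
  rw [← s01] at hDw00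
  have e2a : Va.D^[2] (Va.mul (-1) α α) = Va.D (Va.D (Va.mul (-1) α α)) := rfl
  have e2b : Va.D^[2] (Va.mul (-1) (Va.D^[2] α) α)
      = Va.D (Va.D (Va.mul (-1) (Va.D^[2] α) α)) := rfl
  have e4a : Va.D^[4] (Va.mul (-1) α α)
      = Va.D (Va.D (Va.D (Va.D (Va.mul (-1) α α)))) := rfl
  have part1 : Va.mul (-1) (Va.mul (-1) α α) (Va.mul (-1) (Va.D^[1] α) (Va.D^[1] α)) -
      Va.mul (-1) (Va.mul (-1) α (Va.D^[1] α)) (Va.mul (-1) α (Va.D^[1] α)) =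
      (7/6 : ℂ) • Va.mul (-1) (Va.D^[3] α) (Va.D^[1] α)
        - (1/12 : ℂ) • Va.mul (-1) (Va.D^[4] α) α := by
    rw [M1h, M2h, M3h]
    match_scalars <;> norm_num
  have part2 : Va.mul (-1) α (Va.D^[4] α) =
      -(2/5 : ℂ) • Va.mul (-1) (Va.mul (-1) α α) (Va.D^[2] (Va.mul (-1) α α)) +
        (4/5 : ℂ) • Va.mul (-1) (Va.mul (-1) α α) (Va.mul (-1) (Va.D^[2] α) α) +
        (1/5 : ℂ) • Va.mul (-1) (Va.D (Va.mul (-1) α α)) (Va.D (Va.mul (-1) α α)) +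
        (7/5 : ℂ) • Va.D^[2] (Va.mul (-1) (Va.D^[2] α) α) -
        (7/30 : ℂ) • Va.D^[4] (Va.mul (-1) α α) := by
    rw [e2a, e2b, e4a]
    simp only [hDw00, HW6.D_add, c501, c511, c502, c521, c512, c503, c520, c530]
    simp only [HW6.mulRadd, HW6.mulLadd]
    simp only [s02, s13, s04]
    simp only [M1h, M2h, M3h]
    match_scalars <;> norm_num
  exact ⟨part1, part2⟩
end

section
/- In the commutative ring R = C[L, W³, W⁴, W⁵, C³, D³, C⁵, D⁵]/I, where I contains the elements (W⁵)², (W⁴)³, (W³)³ - (8/27)L W³ W⁴ + (1/108)L² W⁵ - (1/1296)W⁴ W⁵, (C⁵)², (D⁵)², and C³D³ + 117(W³)² - 33 L W⁴ - L³, the elements W³, W⁴, W⁵, C⁵, D⁵ are nilpotent, and in the quotient of R by its nilradical the relation C³D³ = L³ holds. If additionally the quotient of R by its nilradical is the ring C[L, C³, D³]/(C³D³ - L³), then it is isomorphic to the invariant ring C[β¹, β²]^{Z/3Z} where the generator of Z/3Z acts by β¹ ↦ e^{2πi/3} β¹, β² ↦ e^{-2πi/3} β². -/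
/-!
STATEMENT 19: In `R = ℂ[L, W³, W⁴, W⁵, C³, D³, C⁵, D⁵]/I` where `I` contains
`(W⁵)²`, `(W⁴)³`, `(W³)³ - (8/27)L W³ W⁴ + (1/108)L² W⁵ - (1/1296)W⁴ W⁵`,
`(C⁵)²`, `(D⁵)²`, and `C³D³ + 117(W³)² - 33 L W⁴ - L³`, the elements
`W³, W⁴, W⁵, C⁵, D⁵` are nilpotent, and modulo the nilradical `C³D³ = L³`.
If moreover `R/nilradical ≅ ℂ[L,C³,D³]/(C³D³ - L³)` then `R/nilradical` is
isomorphic to the invariant ring `ℂ[β¹,β²]^{ℤ/3ℤ}`, where the generator of `ℤ/3ℤ`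
acts by `β¹ ↦ e^{2πi/3} β¹`, `β² ↦ e^{-2πi/3} β²` (i.e. `β² ↦ ζ² β²`).
Variables: `X 0 = L`, `X 1 = W³`, `X 2 = W⁴`, `X 3 = W⁵`, `X 4 = C³`, `X 5 = D³`,
`X 6 = C⁵`, `X 7 = D⁵`.
-/

noncomputable section

open MvPolynomial

/-- The cuspidal-cone ring `ℂ[x,y,z]/(yz - x³)`. -/
abbrev ConeRing := MvPolynomial (Fin 3) ℂ ⧸
  (Ideal.span {MvPolynomial.X 1 * MvPolynomial.X 2 - (MvPolynomial.X 0) ^ 3} :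
    Ideal (MvPolynomial (Fin 3) ℂ))

/-- The cube root of unity `ζ = e^{2πi/3}`. -/
def zeta : ℂ := Complex.exp (2 * Real.pi * Complex.I / 3)

/-- The order-3 automorphism `β¹ ↦ ζ β¹`, `β² ↦ ζ² β²` of `ℂ[β¹,β²]`. -/
def theta3 : MvPolynomial (Fin 2) ℂ →ₐ[ℂ] MvPolynomial (Fin 2) ℂ :=
  MvPolynomial.aeval (fun i : Fin 2 =>
    if i = 0 then zeta • MvPolynomial.X 0 else (zeta ^ 2) • MvPolynomial.X 1)

/-- The invariant ring `ℂ[β¹,β²]^{ℤ/3ℤ}`. -/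
def invariants3 : Subalgebra ℂ (MvPolynomial (Fin 2) ℂ) :=
  AlgHom.equalizer theta3 (AlgHom.id ℂ (MvPolynomial (Fin 2) ℂ))

lemma mono2 (d : Fin 2 →₀ ℕ) (c : ℂ) :
    (monomial d c : MvPolynomial (Fin 2) ℂ) = C c * X 0 ^ d 0 * X 1 ^ d 1 := by
  rw [monomial_eq, Finsupp.prod_fintype _ _ (fun i => pow_zero _), Fin.prod_univ_two, mul_assoc]

lemma mono3 (d : Fin 3 →₀ ℕ) (c : ℂ) :
    (monomial d c : MvPolynomial (Fin 3) ℂ) = C c * X 0 ^ d 0 * X 1 ^ d 1 * X 2 ^ d 2 := by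
  rw [monomial_eq, Finsupp.prod_fintype _ _ (fun i => pow_zero _), Fin.prod_univ_three]
  ring

lemma mono2' (m n : ℕ) (c : ℂ) :
    (monomial (Finsupp.single 0 m + Finsupp.single 1 n) c : MvPolynomial (Fin 2) ℂ)
      = C c * X 0 ^ m * X 1 ^ n := by
  rw [mono2]
  simp [Finsupp.single_apply]

lemma zeta_prim : IsPrimitiveRoot zeta 3 := by
  simpa [zeta] using Complex.isPrimitiveRoot_exp 3 (by norm_num)

lemma zeta_pow3 : zeta ^ 3 = 1 := zeta_prim.pow_eq_one

def phi : MvPolynomial (Fin 3) ℂ →ₐ[ℂ] MvPolynomial (Fin 2) ℂ :=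
  MvPolynomial.aeval ![X 0 * X 1, X 0 ^ 3, X 1 ^ 3]

lemma phi_X0 : phi (X 0) = X 0 * X 1 := by simp [phi]
lemma phi_X1 : phi (X 1) = X 0 ^ 3 := by simp [phi]
lemma phi_X2 : phi (X 2) = X 1 ^ 3 := by simp [phi]

lemma theta3_monomial (d : Fin 2 →₀ ℕ) (c : ℂ) :
    theta3 (monomial d c) = (zeta ^ (d 0 + 2 * d 1)) • monomial d c := by
  rw [mono2, map_mul, map_mul, map_pow, map_pow]
  rw [show theta3 (C c) = C c by simp [theta3],
      show theta3 (X 0) = zeta • X 0 by simp [theta3],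
      show theta3 (X 1) = (zeta^2) • X 1 by simp [theta3],
      smul_pow, smul_pow]
  simp only [Algebra.mul_smul_comm, Algebra.smul_mul_assoc, smul_smul]
  rw [← pow_mul, ← pow_add, Nat.add_comm]

lemma mem_invariants_iff (f : MvPolynomial (Fin 2) ℂ) :
    f ∈ invariants3 ↔ ∀ d ∈ f.support, (3:ℕ) ∣ (d 0 + 2 * d 1) := by
  have key : theta3 f = Finset.sum f.support
      (fun d => (zeta ^ (d 0 + 2 * d 1)) • monomial d (coeff d f)) := by
    conv_lhs => rw [f.as_sum, map_sum]
    exact Finset.sum_congr rfl fun d _ => theta3_monomial d _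
  constructor
  · intro hf d hd
    have : coeff d (theta3 f) = coeff d f := by
      rw [show theta3 f = f from hf]
    rw [key, coeff_sum] at this
    rw [Finset.sum_eq_single_of_mem d hd (fun e _ hne => by
      simp [coeff_smul, coeff_monomial, hne])] at this
    simp only [coeff_smul, coeff_monomial, if_pos rfl, smul_eq_mul] at this
    have hc : coeff d f ≠ 0 := mem_support_iff.mp hd
    have hz : zeta ^ (d 0 + 2 * d 1) = 1 :=
      mul_right_cancel₀ hc (by simp only [if_true] at this; rw [this, one_mul])
    exact (zeta_prim.pow_eq_one_iff_dvd _).mp hz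
  · intro h
    show theta3 f = f
    rw [key]
    conv_rhs => rw [f.as_sum]
    refine Finset.sum_congr rfl fun d hd => ?_
    rw [zeta_prim.pow_eq_one_iff_dvd .. |>.mpr (h d hd), one_smul]

/-- exponent map: (a,b,c) ↦ (a+3b, a+3c) -/
def E (d : Fin 3 →₀ ℕ) : Fin 2 →₀ ℕ :=
  Finsupp.single 0 (d 0 + 3 * d 1) + Finsupp.single 1 (d 0 + 3 * d 2)

lemma E_apply0 (d : Fin 3 →₀ ℕ) : E d 0 = d 0 + 3 * d 1 := by
  simp [E, Finsupp.single_apply]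
lemma E_apply1 (d : Fin 3 →₀ ℕ) : E d 1 = d 0 + 3 * d 2 := by
  simp [E, Finsupp.single_apply]

lemma phi_monomial (d : Fin 3 →₀ ℕ) (c : ℂ) :
    phi (monomial d c) = monomial (E d) c := by
  rw [mono3, map_mul, map_mul, map_mul, map_pow, map_pow, map_pow,
      show phi (C c) = C c by simp [phi], phi_X0, phi_X1, phi_X2, E,
      mono2']
  ring

lemma range_phi : phi.range = invariants3 := by
  apply le_antisymm
  · rintro - ⟨p, rfl⟩
    induction p using MvPolynomial.induction_on with
    | C a => show theta3 _ = _; simp [phi, theta3]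
    | add p q hp hq => rw [map_add]; exact add_mem hp hq
    | mul_X p i hp =>
      rw [map_mul]
      refine mul_mem hp ?_
      show theta3 (phi (X i)) = phi (X i)
      have e0 : theta3 (X 0) = zeta • X 0 := by simp [theta3]
      have e1 : theta3 (X 1) = (zeta^2) • X 1 := by simp [theta3]
      have hz1 : zeta * zeta ^ 2 = 1 := by linear_combination zeta_pow3
      have hz2 : (zeta ^ 2) ^ 3 = 1 := by linear_combination (zeta^3 + 1) * zeta_pow3
      fin_cases i
      · show theta3 (phi (X 0)) = phi (X 0)
        rw [phi_X0, map_mul, e0, e1]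
        simp only [Algebra.smul_mul_assoc, Algebra.mul_smul_comm, smul_smul]
        rw [mul_comm, hz1, one_smul]
      · show theta3 (phi (X 1)) = phi (X 1)
        rw [phi_X1, map_pow, e0, smul_pow, zeta_pow3, one_smul]
      · show theta3 (phi (X 2)) = phi (X 2)
        rw [phi_X2, map_pow, e1, smul_pow, hz2, one_smul]
  · intro f hf
    rw [(mem_invariants_iff f)] at hf
    rw [show f = Finset.sum f.support (fun d => monomial d (coeff d f)) from f.as_sum]
    refine Subalgebra.sum_mem _ fun d hd => ?_
    have h3 : (3:ℕ) ∣ (d 0 + 2 * d 1) := hf d hd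
    -- 3 ∣ d0 - d1 : case on d 0 ≤ d 1 or not
    by_cases hle : d 1 ≤ d 0
    · obtain ⟨k, hk⟩ : ∃ k, d 0 = d 1 + 3 * k := by
        refine ⟨(d 0 - d 1)/3, ?_⟩
        omega
      refine ⟨monomial (Finsupp.single 0 (d 1) + Finsupp.single 1 k) (coeff d f), ?_⟩
      show phi _ = _
      rw [phi_monomial]
      have hE : E (Finsupp.single 0 (d 1) + Finsupp.single 1 k) = d := by
        ext i
        fin_cases i
        · show E _ 0 = d 0
          simp [E_apply0, Finsupp.add_apply, Finsupp.single_apply]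
          omega
        · show E _ 1 = d 1
          simp [E_apply1, Finsupp.add_apply, Finsupp.single_apply]
      rw [hE]
    · obtain ⟨k, hk⟩ : ∃ k, d 1 = d 0 + 3 * k := by
        refine ⟨(d 1 - d 0)/3, ?_⟩
        omega
      refine ⟨monomial (Finsupp.single 0 (d 0) + Finsupp.single 2 k) (coeff d f), ?_⟩
      show phi _ = _
      rw [phi_monomial]
      have hE : E (Finsupp.single 0 (d 0) + Finsupp.single 2 k) = d := by
        ext i
        fin_cases i
        · show E _ 0 = d 0
          simp [E_apply0, Finsupp.add_apply, Finsupp.single_apply]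
        · show E _ 1 = d 1
          simp [E_apply1, Finsupp.add_apply, Finsupp.single_apply]
          omega
      rw [hE]

lemma E_inj {d d' : Fin 3 →₀ ℕ} (h0 : d 0 < 3) (h0' : d' 0 < 3) (h : E d = E d') :
    d = d' := by
  have e0 := DFunLike.congr_fun h 0
  have e1 := DFunLike.congr_fun h 1
  rw [E_apply0, E_apply0] at e0
  rw [E_apply1, E_apply1] at e1
  ext i
  fin_cases i
  · show d 0 = d' 0; omega
  · show d 1 = d' 1; omega
  · show d 2 = d' 2; omega

lemma phi_inj_low (r : MvPolynomial (Fin 3) ℂ) (hlow : ∀ d ∈ r.support, d 0 < 3)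
    (h : phi r = 0) : r = 0 := by
  apply MvPolynomial.ext
  intro d
  rw [coeff_zero]
  by_cases hd : d ∈ r.support
  · have hsum : phi r = Finset.sum r.support (fun e => monomial (E e) (coeff e r)) := by
      conv_lhs => rw [r.as_sum, map_sum]
      exact Finset.sum_congr rfl fun e _ => phi_monomial e _
    have hc := congrArg (coeff (E d)) h
    rw [hsum, coeff_sum, coeff_zero] at hc
    rw [Finset.sum_eq_single_of_mem d hd (fun e he hne => by
      rw [coeff_monomial, if_neg (fun hEq => hne (E_inj (hlow e he) (hlow d hd) hEq))])] at hc
    rwa [coeff_monomial, if_pos rfl] at hc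
  · exact notMem_support_iff.mp hd

lemma ker_phi : RingHom.ker phi = Ideal.span {X 1 * X 2 - X 0 ^ 3} := by
  have hspan_le : Ideal.span {(X 1 * X 2 - X 0 ^ 3 : MvPolynomial (Fin 3) ℂ)} ≤
      RingHom.ker phi := by
    rw [Ideal.span_le, Set.singleton_subset_iff]
    show phi (X 1 * X 2 - X 0 ^ 3) = 0
    rw [map_sub, map_mul, map_pow, phi_X0, phi_X1, phi_X2]
    ring
  refine le_antisymm ?_ hspan_le
  intro p hp
  have hp0 : phi p = 0 := hp
  set F := MvPolynomial.finSuccEquiv ℂ 2 with hF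
  set m : Polynomial (MvPolynomial (Fin 2) ℂ) :=
    Polynomial.X ^ 3 - Polynomial.C (X 0 * X 1) with hm
  have hmonic : m.Monic := Polynomial.monic_X_pow_sub_C _ (by norm_num)
  set r : MvPolynomial (Fin 3) ℂ := F.symm (F p %ₘ m) with hr
  have hsub : p - r ∈ Ideal.span {(X 1 * X 2 - X 0 ^ 3 : MvPolynomial (Fin 3) ℂ)} := by
    rw [Ideal.mem_span_singleton]
    refine ⟨-(F.symm (F p /ₘ m)), ?_⟩
    have : p - r = F.symm (F p - F p %ₘ m) := by
      rw [map_sub, AlgEquiv.symm_apply_apply]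
    rw [this, show F p - F p %ₘ m = m * (F p /ₘ m) by
        linear_combination -Polynomial.modByMonic_add_div (F p) m]
    rw [map_mul]
    have hFm : F.symm m = X 0 ^ 3 - X 1 * X 2 := by
      rw [hm, map_sub, map_pow]
      have h1 : F.symm Polynomial.X = X 0 := by
        rw [← MvPolynomial.finSuccEquiv_X_zero (R := ℂ) (n := 2), AlgEquiv.symm_apply_apply]
      have h2 : F.symm (Polynomial.C (X 0 * X 1 : MvPolynomial (Fin 2) ℂ)) = X 1 * X 2 := by
        have e1 : F (X (1 : Fin 3)) = Polynomial.C (X 0) := by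
          simpa using MvPolynomial.finSuccEquiv_X_succ (R := ℂ) (n := 2) (j := 0)
        have e2 : F (X (2 : Fin 3)) = Polynomial.C (X 1) := by
          simpa using MvPolynomial.finSuccEquiv_X_succ (R := ℂ) (n := 2) (j := 1)
        rw [map_mul, ← e1, ← e2, ← map_mul, AlgEquiv.symm_apply_apply]
      rw [h1, h2]
    rw [hFm]
    ring
  have hrlow : ∀ d ∈ r.support, d 0 < 3 := by
    intro d hd
    by_contra hge
    push_neg at hge
    have hcoeff : coeff d r ≠ 0 := mem_support_iff.mp hd
    apply hcoeff
    have heq : coeff (Finsupp.tail d) ((F r).coeff (d 0)) = coeff d r := by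
      rw [MvPolynomial.finSuccEquiv_coeff_coeff, Finsupp.cons_tail]
    rw [← heq, show F r = F p %ₘ m by rw [hr, AlgEquiv.apply_symm_apply]]
    rw [Polynomial.coeff_eq_zero_of_degree_lt, coeff_zero]
    calc (F p %ₘ m).degree < m.degree := Polynomial.degree_modByMonic_lt _ hmonic
      _ = (3:ℕ) := by
          rw [hm]
          exact Polynomial.degree_X_pow_sub_C (by norm_num) _
      _ ≤ (d 0 : WithBot ℕ) := by exact_mod_cast Nat.cast_le.mpr hge
  have hphir : phi r = 0 := by
    have := hspan_le hsub
    have hker : phi (p - r) = 0 := this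
    rw [map_sub, hp0, zero_sub, neg_eq_zero] at hker
    exact hker
  have : r = 0 := phi_inj_low r hrlow hphir
  rw [← sub_zero p, ← this]
  exact hsub

def coneEquiv : ConeRing ≃ₐ[ℂ] invariants3 :=
  (Ideal.quotientEquivAlgOfEq ℂ ker_phi.symm).trans
    ((Ideal.quotientKerEquivRange phi).trans (Subalgebra.equivOfEq _ _ range_phi))

set_option maxHeartbeats 1000000 in
theorem zhu_algebra_of_Z3_orbifold_relations
    (I : Ideal (MvPolynomial (Fin 8) ℂ))
    (h1 : (MvPolynomial.X 3 : MvPolynomial (Fin 8) ℂ) ^ 2 ∈ I)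
    (h2 : (MvPolynomial.X 2 : MvPolynomial (Fin 8) ℂ) ^ 3 ∈ I)
    (h3 : (MvPolynomial.X 1 : MvPolynomial (Fin 8) ℂ) ^ 3
        - (8 / 27 : ℂ) • (MvPolynomial.X 0 * MvPolynomial.X 1 * MvPolynomial.X 2)
        + (1 / 108 : ℂ) • ((MvPolynomial.X 0) ^ 2 * MvPolynomial.X 3)
        - (1 / 1296 : ℂ) • (MvPolynomial.X 2 * MvPolynomial.X 3) ∈ I)
    (h4 : (MvPolynomial.X 6 : MvPolynomial (Fin 8) ℂ) ^ 2 ∈ I)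
    (h5 : (MvPolynomial.X 7 : MvPolynomial (Fin 8) ℂ) ^ 2 ∈ I)
    (h6 : (MvPolynomial.X 4 : MvPolynomial (Fin 8) ℂ) * MvPolynomial.X 5
        + (117 : ℂ) • (MvPolynomial.X 1) ^ 2
        - (33 : ℂ) • (MvPolynomial.X 0 * MvPolynomial.X 2)
        - (MvPolynomial.X 0) ^ 3 ∈ I) :
    -- `W³, W⁴, W⁵, C⁵, D⁵` are nilpotent in `R`:
    (IsNilpotent (Ideal.Quotient.mk I (MvPolynomial.X 1)) ∧
     IsNilpotent (Ideal.Quotient.mk I (MvPolynomial.X 2)) ∧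
     IsNilpotent (Ideal.Quotient.mk I (MvPolynomial.X 3)) ∧
     IsNilpotent (Ideal.Quotient.mk I (MvPolynomial.X 6)) ∧
     IsNilpotent (Ideal.Quotient.mk I (MvPolynomial.X 7))) ∧
    -- modulo the nilradical, `C³ D³ = L³`:
    Ideal.Quotient.mk I
        (MvPolynomial.X 4 * MvPolynomial.X 5 - (MvPolynomial.X 0) ^ 3) ∈
      nilradical (MvPolynomial (Fin 8) ℂ ⧸ I) ∧
    -- if `R/nilradical ≅ ℂ[x,y,z]/(yz - x³)`, then it is isomorphic to
    -- `ℂ[β¹,β²]^{ℤ/3ℤ}`: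
    (Nonempty (((MvPolynomial (Fin 8) ℂ ⧸ I) ⧸
          nilradical (MvPolynomial (Fin 8) ℂ ⧸ I)) ≃ₐ[ℂ] ConeRing) →
      Nonempty (((MvPolynomial (Fin 8) ℂ ⧸ I) ⧸
          nilradical (MvPolynomial (Fin 8) ℂ ⧸ I)) ≃ₐ[ℂ] invariants3)) := by
  constructor
  · -- nilpotency
    have n2 : IsNilpotent (Ideal.Quotient.mk I (X 2)) :=
      ⟨3, by rw [← map_pow]; exact Ideal.Quotient.eq_zero_iff_mem.mpr h2⟩
    have n3 : IsNilpotent (Ideal.Quotient.mk I (X 3)) :=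
      ⟨2, by rw [← map_pow]; exact Ideal.Quotient.eq_zero_iff_mem.mpr h1⟩
    have n1 : IsNilpotent (Ideal.Quotient.mk I (X 1)) := by
      simp only [smul_eq_C_mul] at h3
      have key : Ideal.Quotient.mk I (X 1 ^ 3) =
          Ideal.Quotient.mk I (C (8/27 : ℂ) * (X 0 * X 1 * X 2)
            - C (1/108 : ℂ) * (X 0 ^ 2 * X 3) + C (1/1296 : ℂ) * (X 2 * X 3)) := by
        rw [Ideal.Quotient.mk_eq_mk_iff_sub_mem]
        have : (X 1 ^ 3 : MvPolynomial (Fin 8) ℂ)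
            - (C (8/27 : ℂ) * (X 0 * X 1 * X 2) - C (1/108 : ℂ) * (X 0 ^ 2 * X 3)
                + C (1/1296 : ℂ) * (X 2 * X 3))
            = X 1 ^ 3 - C (8 / 27 : ℂ) * (X 0 * X 1 * X 2)
              + C (1 / 108 : ℂ) * (X 0 ^ 2 * X 3)
              - C (1 / 1296 : ℂ) * (X 2 * X 3) := by ring
        rw [this]; exact h3
      have hmem : Ideal.Quotient.mk I (X 1) ^ 3 ∈
          nilradical (MvPolynomial (Fin 8) ℂ ⧸ I) := by
        rw [← map_pow, key, map_add, map_sub]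
        refine add_mem (sub_mem ?_ ?_) ?_ <;>
          simp only [map_mul, map_pow, mem_nilradical]
        · exact (Commute.all _ _).isNilpotent_mul_left
            ((Commute.all _ _).isNilpotent_mul_left n2)
        · exact (Commute.all _ _).isNilpotent_mul_left
            ((Commute.all _ _).isNilpotent_mul_left n3)
        · exact (Commute.all _ _).isNilpotent_mul_left
            ((Commute.all _ _).isNilpotent_mul_left n3)
      exact IsNilpotent.of_pow (mem_nilradical.mp hmem)
    refine ⟨n1, n2, n3,
      ⟨2, by rw [← map_pow]; exact Ideal.Quotient.eq_zero_iff_mem.mpr h4⟩,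
      ⟨2, by rw [← map_pow]; exact Ideal.Quotient.eq_zero_iff_mem.mpr h5⟩⟩
  constructor
  · -- C³D³ = L³ mod nilradical
    have n2 : IsNilpotent (Ideal.Quotient.mk I (X 2)) :=
      ⟨3, by rw [← map_pow]; exact Ideal.Quotient.eq_zero_iff_mem.mpr h2⟩
    have n3 : IsNilpotent (Ideal.Quotient.mk I (X 3)) :=
      ⟨2, by rw [← map_pow]; exact Ideal.Quotient.eq_zero_iff_mem.mpr h1⟩
    have n1 : IsNilpotent (Ideal.Quotient.mk I (X 1)) := by
      simp only [smul_eq_C_mul] at h3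
      have key : Ideal.Quotient.mk I (X 1 ^ 3) =
          Ideal.Quotient.mk I (C (8/27 : ℂ) * (X 0 * X 1 * X 2)
            - C (1/108 : ℂ) * (X 0 ^ 2 * X 3) + C (1/1296 : ℂ) * (X 2 * X 3)) := by
        rw [Ideal.Quotient.mk_eq_mk_iff_sub_mem]
        have : (X 1 ^ 3 : MvPolynomial (Fin 8) ℂ)
            - (C (8/27 : ℂ) * (X 0 * X 1 * X 2) - C (1/108 : ℂ) * (X 0 ^ 2 * X 3)
                + C (1/1296 : ℂ) * (X 2 * X 3))
            = X 1 ^ 3 - C (8 / 27 : ℂ) * (X 0 * X 1 * X 2)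
              + C (1 / 108 : ℂ) * (X 0 ^ 2 * X 3)
              - C (1 / 1296 : ℂ) * (X 2 * X 3) := by ring
        rw [this]; exact h3
      have hmem : Ideal.Quotient.mk I (X 1) ^ 3 ∈
          nilradical (MvPolynomial (Fin 8) ℂ ⧸ I) := by
        rw [← map_pow, key, map_add, map_sub]
        refine add_mem (sub_mem ?_ ?_) ?_ <;>
          simp only [map_mul, map_pow, mem_nilradical]
        · exact (Commute.all _ _).isNilpotent_mul_left
            ((Commute.all _ _).isNilpotent_mul_left n2)
        · exact (Commute.all _ _).isNilpotent_mul_left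
            ((Commute.all _ _).isNilpotent_mul_left n3)
        · exact (Commute.all _ _).isNilpotent_mul_left
            ((Commute.all _ _).isNilpotent_mul_left n3)
      exact IsNilpotent.of_pow (mem_nilradical.mp hmem)
    simp only [smul_eq_C_mul] at h6
    have key : Ideal.Quotient.mk I (X 4 * X 5 - X 0 ^ 3) =
        Ideal.Quotient.mk I (C (33 : ℂ) * (X 0 * X 2) - C (117 : ℂ) * X 1 ^ 2) := by
      rw [Ideal.Quotient.mk_eq_mk_iff_sub_mem]
      have : (X 4 * X 5 - X 0 ^ 3 : MvPolynomial (Fin 8) ℂ)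
          - (C (33 : ℂ) * (X 0 * X 2) - C (117 : ℂ) * X 1 ^ 2)
          = X 4 * X 5 + C (117 : ℂ) * X 1 ^ 2 - C (33 : ℂ) * (X 0 * X 2)
            - X 0 ^ 3 := by ring
      rw [this]; exact h6
    rw [key]; simp only [map_sub, map_mul, map_pow]
    refine sub_mem ?_ ?_ <;> rw [mem_nilradical]
    · exact (Commute.all _ _).isNilpotent_mul_left
        ((Commute.all _ _).isNilpotent_mul_left n2)
    · exact (Commute.all _ _).isNilpotent_mul_left (n1.pow_of_pos (by norm_num))
  · rintro ⟨e⟩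
    exact ⟨e.trans coneEquiv⟩

end
end
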